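/- arXiv:1707.02241 — 10 statements merged into one kernel-verified Lean document; each statement's English description precedes it below -/
import Mathlib

section
/- Let C ⊆ F^n be an F-linear code, let B ⊆ F be a subfield such that F has degree t over B, and let 1 ≤ r ≤ n. Suppose that for every set I ⊆ {1,...,n} with |I| = r there exists a multiple-repair matrix M ∈ F^{n×rt} for I with bandwidth at most b. Then C admits an exact centralized repair scheme for r failures (over B) with bandwidth at most b. -/
lemma repair_aux_recover {B F : Type*} [Field B] [Field F] [Fintype B] [Fintype F] [Algebra B F]
    {n t r : ℕ} (ht : Module.finrank B F = t)
    (I' : Finset (Fin n)) (hI' : I'.card = r)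
    (M : Matrix (Fin n) (Fin (r * t)) F)
    (hinj : ∀ x : Fin (r * t) → B, x ≠ 0 →
      ∃ i ∈ I', ∑ ℓ, M i ℓ * algebraMap B F (x ℓ) ≠ 0)
    (d : Fin n → F)
    (htr : ∀ ℓ, Algebra.trace B F (∑ i ∈ I', d i * M i ℓ) = 0) :
    ∀ i ∈ I', d i = 0 := by
  classical
  let φ : (Fin (r * t) → B) →ₗ[B] ({i // i ∈ I'} → F) :=
    LinearMap.pi fun i => ∑ ℓ, (LinearMap.toSpanSingleton B F (M i.1 ℓ)).comp (LinearMap.proj ℓ)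
  have hφ : ∀ x (i : {i // i ∈ I'}), φ x i = ∑ ℓ, x ℓ • M i.1 ℓ := by
    intro x i
    simp [φ, LinearMap.toSpanSingleton_apply]
  have hφ' : ∀ x (i : {i // i ∈ I'}), φ x i = ∑ ℓ, M i.1 ℓ * algebraMap B F (x ℓ) := by
    intro x i
    rw [hφ]
    simp [Algebra.smul_def, mul_comm]
  have hφinj : Function.Injective φ := by
    rw [injective_iff_map_eq_zero]
    intro x hx
    by_contra hx0
    obtain ⟨i, hi, hne⟩ := hinj x hx0
    exact hne (by rw [← hφ' x ⟨i, hi⟩, hx]; rfl)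
  have hdim : Module.finrank B (Fin (r * t) → B) = Module.finrank B ({i // i ∈ I'} → F) := by
    rw [Module.finrank_pi, Module.finrank_pi_fintype]
    simp [ht, Fintype.card_coe, hI', mul_comm]
  have hsurj : Function.Surjective φ :=
    (LinearMap.injective_iff_surjective_of_finrank_eq_finrank hdim).mp hφinj
  intro i₀ hi₀
  apply (traceForm_nondegenerate B F).1 (d i₀)
  intro f
  rw [Algebra.traceForm_apply]
  set z : {i // i ∈ I'} → F := Pi.single (⟨i₀, hi₀⟩ : {i // i ∈ I'}) f with hz
  obtain ⟨x, hx⟩ := hsurj z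
  calc Algebra.trace B F (d i₀ * f)
      = ∑ i : {i // i ∈ I'}, Algebra.trace B F (d i.1 * z i) := by
        rw [Fintype.sum_eq_single (⟨i₀, hi₀⟩ : {i // i ∈ I'})]
        · simp [hz]
        · intro j hj
          rw [hz, Pi.single_eq_of_ne hj, mul_zero, map_zero]
    _ = ∑ i : {i // i ∈ I'}, Algebra.trace B F (d i.1 * φ x i) := by rw [hx]
    _ = ∑ i : {i // i ∈ I'}, ∑ ℓ, x ℓ • Algebra.trace B F (d i.1 * M i.1 ℓ) := by
        refine Finset.sum_congr rfl fun i _ => ?_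
        simp [hφ, Finset.mul_sum, mul_smul_comm]
    _ = ∑ ℓ, x ℓ • Algebra.trace B F (∑ i ∈ I', d i * M i ℓ) := by
        rw [Finset.sum_comm]
        refine Finset.sum_congr rfl fun ℓ _ => ?_
        rw [← Finset.smul_sum, ← map_sum, ← Finset.sum_coe_sort I' (fun i => d i * M i ℓ)]
    _ = 0 := by simp [htr]



/-- `C` admits an exact centralized repair scheme (over `B`) for `r` failures with
bandwidth at most `b`: for every set `I` of at most `r` failed nodes there are
numbers `bw j` and functions `g j : F → B^{bw j}` for the surviving nodes such that
`∑_{j ∉ I} bw j ≤ b` and the symbols `(c_i)_{i ∈ I}` of any codeword `c ∈ C` are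
determined by the values `(g j (c j))_{j ∉ I}`. -/
def HasRepairScheme (B : Type*) {F : Type*} [Field B] [Field F] [Algebra B F]
    {n : ℕ} (C : Set (Fin n → F)) (r b : ℕ) : Prop :=
  ∀ I : Finset (Fin n), I.card ≤ r →
    ∃ (bw : Fin n → ℕ) (g : (j : Fin n) → F → (Fin (bw j) → B)),
      (∑ j ∈ Iᶜ, bw j ≤ b) ∧
      ∀ c ∈ C, ∀ c' ∈ C,
        (∀ j ∈ Iᶜ, g j (c j) = g j (c' j)) → ∀ i ∈ I, c i = c' i

/-- `M ∈ F^{n × m}` is a multiple-repair matrix for the failed set `I` with bandwidth `b`: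
(1) every column of `M` lies in the dual code of `C`;
(2) `M[I,:] · x ≠ 0` for every nonzero `x ∈ B^m`;
(3) `∑_{j ∉ I} dim_B span_B {M j w : w} = b`. -/
def IsMultipleRepairMatrix (B : Type*) {F : Type*} [Field B] [Field F] [Algebra B F]
    {n m : ℕ} (C : Set (Fin n → F)) (I : Finset (Fin n))
    (M : Matrix (Fin n) (Fin m) F) (b : ℕ) : Prop :=
  (∀ ℓ : Fin m, ∀ c ∈ C, ∑ i, c i * M i ℓ = 0) ∧
  (∀ x : Fin m → B, x ≠ 0 → ∃ i ∈ I, ∑ ℓ, M i ℓ * algebraMap B F (x ℓ) ≠ 0) ∧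
  (∑ j ∈ Iᶜ, Module.finrank B (Submodule.span B (Set.range (M j))) = b)

lemma repair_aux_span {B F : Type*} [Field B] [Field F] [Fintype B] [Fintype F] [Algebra B F]
    (y s : F) (S : Submodule B F)
    (h : ∀ k : Fin (Module.finrank B S),
      Algebra.trace B F (y * (Module.finBasis B S k : F)) = 0)
    (hs : s ∈ S) : Algebra.trace B F (y * s) = 0 := by
  let L : F →ₗ[B] B := (Algebra.trace B F).comp (LinearMap.mulLeft B y)
  have h0 : L.comp S.subtype = 0 := (Module.finBasis B S).ext fun k => by
    simpa [L] using h k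
  have : L.comp S.subtype ⟨s, hs⟩ = 0 := by rw [h0]; rfl
  simpa [L] using this

/-- If for every `I ⊆ [n]` with `|I| = r` there is a multiple-repair
matrix `M ∈ F^{n × rt}` for `I` with bandwidth at most `b`, then the `F`-linear code
`C ⊆ F^n` admits an exact centralized repair scheme for `r` failures with bandwidth
at most `b`. Here `B ⊆ F` is a subfield and `F` has degree `t` over `B`. -/
theorem repair_scheme_of_multiple_repair_matrices
    {B F : Type*} [Field B] [Field F] [Fintype B] [Fintype F] [Algebra B F]
    {n t r b : ℕ} (ht : Module.finrank B F = t)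
    (hr1 : 1 ≤ r) (hrn : r ≤ n)
    (C : Submodule F (Fin n → F))
    (hM : ∀ I : Finset (Fin n), I.card = r →
      ∃ (M : Matrix (Fin n) (Fin (r * t)) F) (b' : ℕ), b' ≤ b ∧
        IsMultipleRepairMatrix B (C : Set (Fin n → F)) I M b') :
    HasRepairScheme B (C : Set (Fin n → F)) r b := by
  classical
  intro I hI
  obtain ⟨I', hII', hI'⟩ := Finset.exists_superset_card_eq hI (by simpa using hrn)
  obtain ⟨M, b', hb', hdual, hinj, hband⟩ := hM I' hI'
  refine ⟨fun j => if j ∈ I' then 0 else Module.finrank B (Submodule.span B (Set.range (M j))),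
    fun j y k =>
      if h : j ∈ I' then 0
      else Algebra.trace B F (y * ((Module.finBasis B (Submodule.span B (Set.range (M j))))
        (Fin.cast (by simp [h]) k) : F)), ?_, ?_⟩
  · have hsub : I'ᶜ ⊆ Iᶜ := Finset.compl_subset_compl.mpr hII'
    calc ∑ j ∈ Iᶜ, (if j ∈ I' then 0
            else Module.finrank B (Submodule.span B (Set.range (M j))))
        = ∑ j ∈ I'ᶜ, (if j ∈ I' then 0
            else Module.finrank B (Submodule.span B (Set.range (M j)))) :=
          (Finset.sum_subset hsub (fun j _ hj => by
            simp only [Finset.mem_compl, not_not] at hj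
            simp [hj])).symm
      _ = ∑ j ∈ I'ᶜ, Module.finrank B (Submodule.span B (Set.range (M j))) :=
          Finset.sum_congr rfl (fun j hj => by simp [Finset.mem_compl.mp hj])
      _ = b' := hband
      _ ≤ b := hb'
  · intro c hc c' hc' hg i hi
    have hd : c - c' ∈ C := sub_mem hc hc'
    have hgd : ∀ j ∉ I', ∀ ℓ, Algebra.trace B F ((c j - c' j) * M j ℓ) = 0 := by
      intro j hj ℓ
      have hjI : j ∈ Iᶜ := Finset.mem_compl.mpr fun h => hj (hII' h)
      have hgj := hg j hjI
      refine repair_aux_span _ _ _ (fun k => ?_) (Submodule.subset_span (Set.mem_range_self ℓ))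
      have h2 := congrFun hgj (Fin.cast (by simp [hj]) k)
      simp only [dif_neg hj] at h2
      rw [sub_mul, map_sub]
      simpa using sub_eq_zero.mpr h2
    have htr : ∀ ℓ, Algebra.trace B F (∑ i ∈ I', (c - c') i * M i ℓ) = 0 := by
      intro ℓ
      have h0 : ∑ i, (c - c') i * M i ℓ = 0 := hdual ℓ _ hd
      rw [← Finset.sum_add_sum_compl I'] at h0
      rw [eq_neg_of_add_eq_zero_left h0, map_neg, neg_eq_zero, map_sum]
      refine Finset.sum_eq_zero fun j hj => ?_
      simpa using hgd j (Finset.mem_compl.mp hj) ℓ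
    have h3 := repair_aux_recover ht I' hI' M hinj (c - c') htr i (hII' hi)
    simpa [sub_eq_zero] using h3
end

section
/- Let B ⊆ F be a subfield such that F has degree t over B, and let C ⊆ F^n be a Reed-Solomon code of dimension k (with n distinct evaluation points in F and 1 ≤ k < n ≤ |F|). Let 1 ≤ r ≤ n−k. Then C admits an exact centralized repair scheme for r failures (over B) with bandwidth at most min over integers r' with r ≤ r' ≤ n−k of (n−r')·(t − s(r')), where s(r') = ⌊log_{|B|}((n−k+r'−1)/(2r'−1))⌋ is the largest nonnegative integer s with |B|^s·(2r'−1) ≤ n−k+r'−1. -/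
open Polynomial Finset

lemma exists_linearized {B F : Type*} [Field B] [Field F] [Fintype B] [Fintype F] [Algebra B F]
    (s : ℕ) :
    ∃ (c : ℕ → F) (V : Submodule B F), c 0 ≠ 0 ∧
      Module.finrank B ↥V ≤ Module.finrank B F - s ∧
      ∀ y : F, (∑ m ∈ Finset.range (s+1), c m * y ^ (Fintype.card B) ^ m) ∈ V := by
  classical
  set q := Fintype.card B with hq
  set p := ringChar B with hp
  haveI : Fact (Nat.Prime p) := ⟨CharP.char_is_prime B p⟩
  haveI hFp : CharP F p :=
    charP_of_injective_ringHom (algebraMap B F).injective p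
  obtain ⟨e, hpe, hcard⟩ := FiniteField.card B p
  have hq1 : 1 ≤ q := Fintype.card_pos
  induction s with
  | zero =>
    refine ⟨fun _ => 1, ⊤, one_ne_zero, ?_, fun y => Submodule.mem_top⟩
    simp
  | succ s ih =>
    obtain ⟨c, V, hc0, hV, hmem⟩ := ih
    by_cases h : Module.finrank B ↥V ≤ Module.finrank B F - (s+1)
    · refine ⟨fun m => if m ≤ s then c m else 0, V, by simpa using hc0, h, fun y => ?_⟩
      rw [Finset.sum_range_succ]
      simp only []
      rw [if_neg (by omega : ¬ (s+1 ≤ s)), zero_mul, add_zero]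
      have h1 : ∀ m ∈ Finset.range (s+1),
          (if m ≤ s then c m else 0) * y ^ q ^ m = c m * y ^ q ^ m := by
        intro m hm
        rw [if_pos (by have := Finset.mem_range.mp hm; omega : m ≤ s)]
      rw [Finset.sum_congr rfl h1]
      exact hmem y
    · have hVne : V ≠ ⊥ := by
        intro hbot
        rw [hbot] at h
        simp [finrank_bot] at h
      obtain ⟨v, hvV, hv0⟩ := (Submodule.ne_bot_iff V).mp hVne
      set d := v ^ (q - 1) with hd
      have hd0 : d ≠ 0 := pow_ne_zero _ hv0
      have hfrob : ∀ z w : F, (z + w) ^ q = z ^ q + w ^ q := by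
        intro z w
        rw [hq, hcard]
        exact add_pow_char_pow z w p e
      have hbq : ∀ b : B, (algebraMap B F b) ^ q = algebraMap B F b := by
        intro b
        rw [← map_pow, FiniteField.pow_card]
      set θ : F →ₗ[B] F :=
        { toFun := fun z => z ^ q - d * z
          map_add' := by
            intro z w
            rw [hfrob]
            ring
          map_smul' := by
            intro b z
            simp only [Algebra.smul_def, RingHom.id_apply]
            rw [mul_pow, hbq]
            ring } with hθ
      have hθapp : ∀ z : F, θ z = z ^ q - d * z := fun z => rfl
      have hθv : θ v = 0 := by
        rw [hθapp, hd, ← pow_succ, (by omega : q - 1 + 1 = q), sub_self]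
      -- rank drop
      set φ : ↥V →ₗ[B] F := θ.comp V.subtype with hφ
      have hrange : LinearMap.range φ = V.map θ := by
        rw [hφ, LinearMap.range_comp, Submodule.range_subtype]
      have hkermem : (⟨v, hvV⟩ : ↥V) ∈ LinearMap.ker φ := by
        simp only [LinearMap.mem_ker, hφ, LinearMap.comp_apply, Submodule.coe_subtype]
        exact hθv
      have hkerpos : 0 < Module.finrank B ↥(LinearMap.ker φ) := by
        apply (Module.finrank_pos_iff_exists_ne_zero (R := B) (M := ↥(LinearMap.ker φ))).mpr
        refine ⟨⟨⟨v, hvV⟩, hkermem⟩, ?_⟩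
        intro hcontra
        apply hv0
        simpa [Subtype.ext_iff] using hcontra
      have hrank := LinearMap.finrank_range_add_finrank_ker φ
      have hmaprank : Module.finrank B ↥(V.map θ) ≤ Module.finrank B F - (s+1) := by
        rw [← hrange]
        have hVd : Module.finrank B ↥V ≤ Module.finrank B F := V.finrank_le
        omega
      -- new coefficients
      refine ⟨fun m => (if m ≤ s then -(d * c m) else 0) +
          (if 1 ≤ m ∧ m ≤ s + 1 then (c (m-1)) ^ q else 0), V.map θ, ?_, hmaprank, ?_⟩
      · simp only [zero_le, if_pos, Nat.le_zero]
        norm_num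
        exact ⟨hd0, hc0⟩
      · intro y
        have key : (∑ m ∈ Finset.range (s+2),
            ((if m ≤ s then -(d * c m) else 0) +
             (if 1 ≤ m ∧ m ≤ s + 1 then (c (m-1)) ^ q else 0)) * y ^ q ^ m)
            = θ (∑ m ∈ Finset.range (s+1), c m * y ^ q ^ m) := by
          rw [hθapp]
          -- power of sum
          have hpow : (∑ m ∈ Finset.range (s+1), c m * y ^ q ^ m) ^ q
              = ∑ m ∈ Finset.range (s+1), (c m) ^ q * y ^ q ^ (m+1) := by
            have : ∀ x : F, x ^ q = iterateFrobenius F p (e : ℕ) x := by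
              intro x; rw [iterateFrobenius_def, ← hcard, hq]
            rw [this, map_sum]
            refine Finset.sum_congr rfl fun m hm => ?_
            rw [← this, mul_pow, ← pow_mul, ← pow_succ]
          have e2 : (∑ m ∈ Finset.range (s+2),
              (if 1 ≤ m ∧ m ≤ s + 1 then (c (m-1)) ^ q else 0) * y ^ q ^ m)
              = ∑ m ∈ Finset.range (s+1), (c m) ^ q * y ^ q ^ (m+1) := by
            rw [Finset.sum_range_succ' (fun m =>
              (if 1 ≤ m ∧ m ≤ s + 1 then (c (m-1)) ^ q else 0) * y ^ q ^ m) (s+1)]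
            rw [if_neg (by omega : ¬ (1 ≤ 0 ∧ 0 ≤ s + 1)), zero_mul, add_zero]
            refine Finset.sum_congr rfl fun m hm => ?_
            rw [if_pos ⟨by omega, by have := Finset.mem_range.mp hm; omega⟩,
              Nat.add_sub_cancel]
          have e1 : (∑ m ∈ Finset.range (s+2),
              (if m ≤ s then -(d * c m) else 0) * y ^ q ^ m)
              = -∑ m ∈ Finset.range (s+1), d * (c m * y ^ q ^ m) := by
            rw [Finset.sum_range_succ]
            rw [if_neg (by omega : ¬ (s+1 ≤ s)), zero_mul, add_zero, ← Finset.sum_neg_distrib]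
            refine Finset.sum_congr rfl fun m hm => ?_
            rw [if_pos (by have := Finset.mem_range.mp hm; omega : m ≤ s)]
            ring
          rw [hpow, Finset.mul_sum]
          simp only [add_mul]
          rw [Finset.sum_add_distrib, e1, e2]
          ring
        rw [key]
        exact Submodule.mem_map_of_mem (hmem y)


lemma dual_sum {K : Type*} [Field K] {n : ℕ} (β : Fin n → K)
    (hβ : Function.Injective β) (P : K[X]) (hP : P.degree < ((n - 1 : ℕ) : WithBot ℕ)) :
    ∑ j, (∏ l ∈ Finset.univ.erase j, (β j - β l))⁻¹ * P.eval (β j) = 0 := by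
  classical
  rcases Nat.eq_zero_or_pos n with hn | hn
  · subst hn; simp
  have hcard : (Finset.univ : Finset (Fin n)).card = n := by simp
  have hinj : Set.InjOn β ↑(Finset.univ : Finset (Fin n)) := hβ.injOn
  have hdeg : P.degree < ((Finset.univ : Finset (Fin n)).card : WithBot ℕ) := by
    refine lt_of_lt_of_le hP ?_
    rw [hcard]
    exact_mod_cast Nat.cast_le.mpr (by omega : n - 1 ≤ n)
  have hPeq := Lagrange.eq_interpolate hinj hdeg
  have h0 : P.coeff (n-1) = 0 := coeff_eq_zero_of_degree_lt hP
  -- leading coefficients of the basis polynomials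
  have hlb : ∀ j : Fin n, ((Lagrange.basis Finset.univ β j).coeff (n-1))
      = (∏ l ∈ Finset.univ.erase j, (β j - β l))⁻¹ := by
    intro j
    have hdb : (Lagrange.basis Finset.univ β j).degree = ((n - 1 : ℕ) : WithBot ℕ) := by
      rw [Lagrange.degree_basis hinj (Finset.mem_univ j), hcard]
    have hnd : (Lagrange.basis Finset.univ β j).natDegree = n - 1 :=
      natDegree_eq_of_degree_eq_some hdb
    rw [← hnd, Polynomial.coeff_natDegree]
    unfold Lagrange.basis
    rw [Polynomial.leadingCoeff_prod, ← Finset.prod_inv_distrib]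
    refine Finset.prod_congr rfl fun l hl => ?_
    unfold Lagrange.basisDivisor
    rw [Polynomial.leadingCoeff_mul, Polynomial.leadingCoeff_X_sub_C, Polynomial.leadingCoeff_C,
      mul_one]
  have := congrArg (fun Q : K[X] => Q.coeff (n-1)) hPeq
  simp only [Lagrange.interpolate_apply, Polynomial.finset_sum_coeff,
    Polynomial.coeff_C_mul] at this
  rw [h0] at this
  rw [show (0:K) = ∑ x : Fin n, P.eval (β x) * (Lagrange.basis Finset.univ β x).coeff (n - 1)
    from this]
  refine Finset.sum_congr rfl fun j _ => ?_
  rw [hlb j]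
  ring


/-- The Reed-Solomon code of dimension `k` with evaluation points `α 0, …, α (n-1)`. -/
def rsCode {F : Type*} [Field F] {n : ℕ} (k : ℕ) (α : Fin n → F) : Set (Fin n → F) :=
  {v | ∃ f : Polynomial F, f.degree < (k : ℕ) ∧ ∀ i, v i = f.eval (α i)}

/-- A Reed-Solomon code of dimension `k` and length `n` over `F`
(with `B ⊆ F` a subfield of degree `t`) admits, for any `1 ≤ r ≤ n - k`, an exact
centralized repair scheme for `r` failures with bandwidth at most
`min_{r ≤ r' ≤ n-k} (n - r') * (t - ⌊log_{|B|}((n-k+r'-1)/(2r'-1))⌋)`. -/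
theorem rs_repair_scheme_main
    {B F : Type*} [Field B] [Field F] [Fintype B] [Fintype F] [Algebra B F]
    {n k t r : ℕ} (ht : Module.finrank B F = t)
    (α : Fin n → F) (hα : Function.Injective α)
    (hk : 1 ≤ k) (hkn : k < n) (hn : n ≤ Fintype.card F)
    (hr1 : 1 ≤ r) (hrnk : r ≤ n - k) :
    HasRepairScheme B (rsCode k α) r
      (((Finset.Icc r (n - k)).image (fun r' =>
          (n - r') * (t - Nat.log (Fintype.card B) ((n - k + r' - 1) / (2 * r' - 1))))).min'
        (Finset.Nonempty.image (Finset.nonempty_Icc.mpr hrnk) _)) := by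
  classical
  have hq2 : 1 < Fintype.card B := Fintype.one_lt_card
  intro I hI
  -- choose the minimizing r'
  obtain ⟨r', hr'mem, hr'val⟩ := Finset.mem_image.mp (Finset.min'_mem
    ((Finset.Icc r (n - k)).image (fun r' =>
      (n - r') * (t - Nat.log (Fintype.card B) ((n - k + r' - 1) / (2 * r' - 1)))))
    (Finset.Nonempty.image (Finset.nonempty_Icc.mpr hrnk) _))
  obtain ⟨hrr', hr'nk⟩ := Finset.mem_Icc.mp hr'mem
  have hr'1 : 1 ≤ r' := le_trans hr1 hrr'
  set s := Nat.log (Fintype.card B) ((n - k + r' - 1) / (2 * r' - 1)) with hs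
  have hpowlog : Fintype.card B ^ s * (2 * r' - 1) ≤ n - k + r' - 1 := by
    calc Fintype.card B ^ s * (2 * r' - 1)
        ≤ ((n - k + r' - 1) / (2 * r' - 1)) * (2 * r' - 1) :=
          Nat.mul_le_mul_right _ (Nat.pow_log_le_self _ (by
            have : 1 ≤ (n - k + r' - 1) / (2 * r' - 1) :=
              (Nat.one_le_div_iff (by omega)).mpr (by omega)
            omega))
      _ ≤ n - k + r' - 1 := Nat.div_mul_le_self _ _
  -- extend I to a set I' of size r'
  obtain ⟨I', hII', -, hI'card⟩ := Finset.exists_subsuperset_card_eq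
    (Finset.subset_univ I) (le_trans hI hrr')
    (by rw [Finset.card_univ, Fintype.card_fin]; omega)
  -- linearized polynomial data
  obtain ⟨cf, V, hcf0, hVrank, hVmem⟩ := exists_linearized (B := B) (F := F) s
  rw [ht] at hVrank
  -- nonzero functional
  have htpos : 0 < Module.finrank B F := Module.finrank_pos
  set bF := Module.finBasis B F with hbF
  set idx0 : Fin (Module.finrank B F) := ⟨0, htpos⟩ with hidx
  set lam : F →ₗ[B] B := bF.coord idx0 with hlam
  have hlam1 : lam (bF idx0) = 1 := by
    rw [hlam, Module.Basis.coord_apply, Module.Basis.repr_self]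
    simp
  -- spanning family of V
  set dimV := Module.finrank B ↥V with hdimV
  set bV := Module.finBasis B ↥V with hbV
  set vv : Fin (t - s) → F := fun l => if h : (l : ℕ) < dimV then (bV ⟨(l : ℕ), h⟩ : F) else 0
    with hvv
  -- multipliers
  set u : Fin n → F := fun j => (∏ l ∈ Finset.univ.erase j, (α j - α l))⁻¹ with hu
  set Gv : Fin n → F := fun j => ∏ i'' ∈ I', (α j - α i'') with hGv
  have hGvne : ∀ j, j ∉ I' → Gv j ≠ 0 := by
    intro j hj
    rw [hGv]
    refine Finset.prod_ne_zero_iff.mpr fun i'' hi'' => sub_ne_zero.mpr fun heq => ?_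
    exact hj (by rwa [hα heq])
  have hune : ∀ j, u j ≠ 0 := by
    intro j
    rw [hu]
    refine inv_ne_zero (Finset.prod_ne_zero_iff.mpr fun l hl => sub_ne_zero.mpr fun heq => ?_)
    exact (Finset.ne_of_mem_erase hl) (hα heq).symm
  -- the scheme
  set bw : Fin n → ℕ := fun j => if j ∈ I' then 0 else t - s with hbw
  have hbwle : ∀ j, bw j ≤ t - s := by
    intro j
    rw [hbw]
    dsimp only
    split <;> omega
  set g : (j : Fin n) → F → (Fin (bw j) → B) :=
    fun j y l => lam (u j * (Gv j)⁻¹ * vv (Fin.castLE (hbwle j) l) * y) with hg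
  refine ⟨bw, g, ?_, ?_⟩
  · -- bandwidth bound
    have h7 : ∀ j ∈ Iᶜ, bw j = if j ∈ I' then 0 else (t - s) := fun j _ => rfl
    rw [Finset.sum_congr rfl h7, Finset.sum_ite, Finset.sum_const, Finset.sum_const]
    have h8 : Finset.filter (fun j => ¬ j ∈ I') Iᶜ = I'ᶜ := by
      ext j
      simp only [Finset.mem_filter, Finset.mem_compl]
      exact ⟨fun h => h.2, fun h => ⟨fun hjI => h (hII' hjI), h⟩⟩
    rw [h8, Finset.card_compl, Fintype.card_fin, hI'card]
    simp only [smul_zero, zero_add, smul_eq_mul, mul_zero]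
    exact le_of_eq hr'val
  · -- repair correctness
    intro cw hcw cw' hcw' hagree i hiI
    obtain ⟨f, hfdeg, hfeval⟩ := hcw
    obtain ⟨f', hf'deg, hf'eval⟩ := hcw'
    have hiI' : i ∈ I' := hII' hiI
    set dd : Polynomial F := f - f' with hdd
    have hdddeg : dd.degree < (k : ℕ) :=
      lt_of_le_of_lt (Polynomial.degree_sub_le f f') (max_lt hfdeg hf'deg)
    set U : Polynomial F := ∏ i'' ∈ I'.erase i, (X - C (α i'')) with hU
    set G : Polynomial F := ∏ i'' ∈ I', (X - C (α i'')) with hG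
    have hUeval : ∀ x : F, U.eval x = ∏ i'' ∈ I'.erase i, (x - α i'') := by
      intro x; rw [hU]; simp [Polynomial.eval_prod]
    have hGeval : ∀ x : F, G.eval x = ∏ i'' ∈ I', (x - α i'') := by
      intro x; rw [hG]; simp [Polynomial.eval_prod]
    set w0 : F := ∏ i'' ∈ I'.erase i, (α i - α i'') with hw0def
    have hw0 : w0 ≠ 0 := by
      rw [hw0def]
      refine Finset.prod_ne_zero_iff.mpr fun i'' hi'' => sub_ne_zero.mpr fun heq => ?_
      exact (Finset.ne_of_mem_erase hi'') (hα heq).symm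
    -- degree facts
    have hUdeg : U.natDegree ≤ r' - 1 := by
      refine le_trans (Polynomial.natDegree_prod_le _ _) ?_
      rw [Finset.sum_congr rfl (fun x _ => Polynomial.natDegree_X_sub_C (α x)),
        Finset.sum_const, Finset.card_erase_of_mem hiI', hI'card, smul_eq_mul, mul_one]
    have hGdeg : G.natDegree ≤ r' := by
      refine le_trans (Polynomial.natDegree_prod_le _ _) ?_
      rw [Finset.sum_congr rfl (fun x _ => Polynomial.natDegree_X_sub_C (α x)),
        Finset.sum_const, hI'card, smul_eq_mul, mul_one]
    -- the "sent data implies functional vanishing" facts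
    have Hl : ∀ j, j ∉ I' → ∀ l : Fin (t - s),
        lam (u j * (Gv j)⁻¹ * vv l * Polynomial.eval (α j) dd) = 0 := by
      intro j hjI' l
      have hjIc : j ∈ Iᶜ := Finset.mem_compl.mpr fun hjI => hjI' (hII' hjI)
      have hbwj : bw j = t - s := by rw [hbw]; simp [hjI']
      have h6 := congrFun (hagree j hjIc) (Fin.cast hbwj.symm l)
      simp only [hg] at h6
      have hcast : Fin.castLE (hbwle j) (Fin.cast hbwj.symm l) = l := rfl
      rw [hcast] at h6
      have h7 : u j * (Gv j)⁻¹ * vv l * Polynomial.eval (α j) dd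
          = u j * (Gv j)⁻¹ * vv l * cw j - u j * (Gv j)⁻¹ * vv l * cw' j := by
        rw [hfeval j, hf'eval j, hdd, Polynomial.eval_sub]; ring
      rw [h7, map_sub, h6, sub_self]
    have Hw : ∀ j ∈ I'ᶜ, ∀ w ∈ V,
        lam (u j * (Gv j)⁻¹ * w * Polynomial.eval (α j) dd) = 0 := by
      intro j hj w hw
      have hjI' : j ∉ I' := Finset.mem_compl.mp hj
      have hw' : w = ∑ idx : Fin dimV, bV.repr ⟨w, hw⟩ idx • (bV idx : F) := by
        have h8 := bV.sum_repr ⟨w, hw⟩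
        have h9 := congrArg (Subtype.val) h8
        push_cast at h9
        exact h9.symm
      rw [hw', Finset.mul_sum, Finset.sum_mul, map_sum]
      refine Finset.sum_eq_zero fun idx _ => ?_
      rw [mul_smul_comm, smul_mul_assoc, map_smul]
      have hlt : (idx : ℕ) < t - s := lt_of_lt_of_le idx.2 hVrank
      have h11 : (bV idx : F) = vv ⟨(idx : ℕ), hlt⟩ := by
        rw [hvv]
        simp only []
        rw [dif_pos (show ((⟨(idx : ℕ), hlt⟩ : Fin (t - s)) : ℕ) < dimV from idx.2)]
      rw [h11, Hl j hjI' ⟨(idx : ℕ), hlt⟩, smul_zero]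
    -- main identity for every γ
    have key : ∀ γ : F,
        lam (γ * (u i * (cf 0 * (w0 * Polynomial.eval (α i) dd)))) = 0 := by
      intro γ
      set Pg : Polynomial F := ∑ m ∈ Finset.range (s+1),
        C (cf m * γ ^ Fintype.card B ^ m) * U ^ (Fintype.card B ^ m)
          * G ^ (Fintype.card B ^ m - 1) with hPg
      -- degree bound on Pg
      have hterm : ∀ m ∈ Finset.range (s+1),
          (C (cf m * γ ^ Fintype.card B ^ m) * U ^ (Fintype.card B ^ m)
            * G ^ (Fintype.card B ^ m - 1)).degree ≤ ((n - k - 1 : ℕ) : WithBot ℕ) := by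
        intro m hm
        refine le_trans Polynomial.degree_le_natDegree ?_
        rw [Nat.cast_le]
        have h1 := Polynomial.natDegree_mul_le
          (p := C (cf m * γ ^ Fintype.card B ^ m) * U ^ (Fintype.card B ^ m))
          (q := G ^ (Fintype.card B ^ m - 1))
        have h2 := Polynomial.natDegree_mul_le
          (p := C (cf m * γ ^ Fintype.card B ^ m)) (q := U ^ (Fintype.card B ^ m))
        have h3 := Polynomial.natDegree_pow_le (p := U) (n := Fintype.card B ^ m)
        have h4 := Polynomial.natDegree_pow_le (p := G) (n := Fintype.card B ^ m - 1)
        have h5 : (C (cf m * γ ^ Fintype.card B ^ m)).natDegree = 0 := Polynomial.natDegree_C _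
        have hm' : m ≤ s := by have := Finset.mem_range.mp hm; omega
        have hqm : Fintype.card B ^ m ≤ Fintype.card B ^ s :=
          Nat.pow_le_pow_right (by omega) hm'
        have hqm1 : 1 ≤ Fintype.card B ^ m := Nat.one_le_pow _ _ (by omega)
        have hkey : Fintype.card B ^ m * (2 * r' - 1) ≤ n - k + r' - 1 :=
          le_trans (Nat.mul_le_mul_right _ hqm) hpowlog
        have p1 : Fintype.card B ^ m * (2 * r' - 1)
            = 2 * (Fintype.card B ^ m * r') - Fintype.card B ^ m := by
          rw [Nat.mul_sub]; ring_nf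
        have p2 : Fintype.card B ^ m * (r' - 1)
            = Fintype.card B ^ m * r' - Fintype.card B ^ m := by
          rw [Nat.mul_sub]; ring_nf
        have p3 : (Fintype.card B ^ m - 1) * r' = Fintype.card B ^ m * r' - r' := by
          rw [Nat.sub_mul]; ring_nf
        have hm1 : Fintype.card B ^ m * U.natDegree ≤ Fintype.card B ^ m * (r' - 1) :=
          Nat.mul_le_mul_left _ hUdeg
        have hm2 : (Fintype.card B ^ m - 1) * G.natDegree ≤ (Fintype.card B ^ m - 1) * r' :=
          Nat.mul_le_mul_left _ hGdeg
        have hx1 : Fintype.card B ^ m ≤ Fintype.card B ^ m * r' :=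
          Nat.le_mul_of_pos_right _ (by omega)
        have hx2 : r' ≤ Fintype.card B ^ m * r' := Nat.le_mul_of_pos_left _ (by omega)
        omega
      have hPdeg : Pg.degree ≤ ((n - k - 1 : ℕ) : WithBot ℕ) := by
        rw [hPg]
        exact le_trans (Polynomial.degree_sum_le _ _) (Finset.sup_le hterm)
      have hPd : (Pg * dd).degree < ((n - 1 : ℕ) : WithBot ℕ) := by
        rcases eq_or_ne dd 0 with hdd0 | hdd0
        · rw [hdd0, mul_zero, Polynomial.degree_zero]
          exact WithBot.bot_lt_coe _
        · have h6 : dd.natDegree < k := (Polynomial.natDegree_lt_iff_degree_lt hdd0).mpr hdddeg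
          have h7 : dd.degree ≤ ((k - 1 : ℕ) : WithBot ℕ) :=
            le_trans Polynomial.degree_le_natDegree (by exact_mod_cast (by omega : dd.natDegree ≤ k - 1))
          calc (Pg * dd).degree ≤ Pg.degree + dd.degree := Polynomial.degree_mul_le _ _
            _ ≤ ((n - k - 1 : ℕ) : WithBot ℕ) + ((k - 1 : ℕ) : WithBot ℕ) := add_le_add hPdeg h7
            _ = ((n - 2 : ℕ) : WithBot ℕ) := by
                rw [← Nat.cast_add]
                congr 1
                omega
            _ < ((n - 1 : ℕ) : WithBot ℕ) := by exact_mod_cast (by omega : n - 2 < n - 1)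
      have hdual : ∑ j, u j * Polynomial.eval (α j) (Pg * dd) = 0 := by
        simp only [hu]
        exact dual_sum α hα (Pg * dd) hPd
      -- pointwise evaluations
      have hPgeval : ∀ x : F, Pg.eval x = ∑ m ∈ Finset.range (s+1),
          cf m * γ ^ Fintype.card B ^ m * (U.eval x) ^ Fintype.card B ^ m *
            (G.eval x) ^ (Fintype.card B ^ m - 1) := by
        intro x; rw [hPg]; simp [Polynomial.eval_finset_sum]
      have hzero : ∀ i'' ∈ I'.erase i, u i'' * Polynomial.eval (α i'') (Pg * dd) = 0 := by
        intro i'' hi''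
        have hU0 : U.eval (α i'') = 0 := by
          rw [hUeval]; exact Finset.prod_eq_zero hi'' (sub_self _)
        have : Pg.eval (α i'') = 0 := by
          rw [hPgeval]
          refine Finset.sum_eq_zero fun m hm => ?_
          rw [hU0, zero_pow (by positivity : Fintype.card B ^ m ≠ 0), mul_zero, zero_mul]
        rw [Polynomial.eval_mul, this, zero_mul, mul_zero]
      have hG0i : G.eval (α i) = 0 := by
        rw [hGeval]; exact Finset.prod_eq_zero hiI' (sub_self _)
      have hvi : Pg.eval (α i) = cf 0 * γ * w0 := by
        rw [hPgeval]
        rw [Finset.sum_eq_single_of_mem 0 (Finset.mem_range.mpr (Nat.succ_pos s))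
          (fun m hm hm0 => by
            rw [hG0i, zero_pow (by
              have := Nat.one_lt_pow hm0 hq2
              omega : Fintype.card B ^ m - 1 ≠ 0), mul_zero])]
        rw [hUeval, ← hw0def]
        simp
      have hhelp : ∀ j ∈ I'ᶜ, u j * Polynomial.eval (α j) (Pg * dd)
          = u j * (Gv j)⁻¹ * (∑ m ∈ Finset.range (s+1),
              cf m * (γ * U.eval (α j) * Gv j) ^ Fintype.card B ^ m)
            * Polynomial.eval (α j) dd := by
        intro j hj
        have hjI' : j ∉ I' := Finset.mem_compl.mp hj
        have hGvj : Gv j ≠ 0 := hGvne j hjI'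
        have hGj : G.eval (α j) = Gv j := by rw [hGeval, hGv]
        have hPgevalj : Pg.eval (α j) = (Gv j)⁻¹ * ∑ m ∈ Finset.range (s+1),
            cf m * (γ * U.eval (α j) * Gv j) ^ Fintype.card B ^ m := by
          rw [hPgeval, Finset.mul_sum]
          refine Finset.sum_congr rfl fun m hm => ?_
          have hqm1 : 1 ≤ Fintype.card B ^ m := Nat.one_le_pow _ _ (by omega)
          have he2 : (Gv j) ^ (Fintype.card B ^ m)
              = (Gv j) ^ (Fintype.card B ^ m - 1) * Gv j := by
            conv_lhs => rw [(by omega : Fintype.card B ^ m = (Fintype.card B ^ m - 1) + 1)]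
            rw [pow_succ]
          rw [hGj, mul_pow, mul_pow, he2]
          field_simp
        rw [Polynomial.eval_mul, hPgevalj]
        ring
      -- assemble
      have hsum : ∑ j, u j * Polynomial.eval (α j) (Pg * dd)
          = u i * Polynomial.eval (α i) (Pg * dd)
            + ∑ j ∈ I'ᶜ, u j * Polynomial.eval (α j) (Pg * dd) := by
        rw [← Finset.sum_add_sum_compl I']
        congr 1
        rw [← Finset.add_sum_erase I' _ hiI', Finset.sum_eq_zero hzero, add_zero]
      rw [hsum, Finset.sum_congr rfl hhelp] at hdual
      have hvi' : u i * Polynomial.eval (α i) (Pg * dd)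
          = γ * (u i * (cf 0 * (w0 * Polynomial.eval (α i) dd))) := by
        rw [Polynomial.eval_mul, hvi]; ring
      rw [hvi'] at hdual
      have hlam0 := congrArg lam hdual
      rw [map_add, map_sum, map_zero] at hlam0
      rw [Finset.sum_eq_zero (fun j hj => Hw j hj _ (hVmem _)), add_zero] at hlam0
      exact hlam0
    -- conclude
    have hE : Polynomial.eval (α i) dd = 0 := by
      by_contra hEne
      have hne : u i * (cf 0 * (w0 * Polynomial.eval (α i) dd)) ≠ 0 :=
        mul_ne_zero (hune i) (mul_ne_zero hcf0 (mul_ne_zero hw0 hEne))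
      have h1 := key (bF idx0 * (u i * (cf 0 * (w0 * Polynomial.eval (α i) dd)))⁻¹)
      rw [mul_assoc, inv_mul_cancel₀ hne, mul_one, hlam1] at h1
      exact one_ne_zero h1
    rw [hfeval i, hf'eval i]
    rw [hdd, Polynomial.eval_sub] at hE
    exact sub_eq_zero.mp hE
end

section
/- Let n = |F| and let C ⊆ F^n be the full-length Reed-Solomon code of dimension k = n − n/|B| with evaluation points α_1,...,α_n enumerating F. Fix i ∈ {1,...,n}, a nonzero δ ∈ F, and a basis ζ_1,...,ζ_t of F over B. Define M ∈ F^{n×t} by M[j,w] = δ·tr_{F/B}(ζ_w·(α_j − α_i))/(α_j − α_i) for j ≠ i, and M[i,w] = δ·ζ_w. Then M is a repair matrix for index i with bandwidth n−1. -/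
/-- The field trace of `F` over a subfield `B` of index `t`, viewed with values in `F`:
`tr(x) = ∑_{m=0}^{t-1} x^(|B|^m)`. -/
def fieldTrace (B : Type*) {F : Type*} [Field B] [Field F] [Fintype B] [Algebra B F]
    (t : ℕ) (x : F) : F :=
  ∑ m ∈ Finset.range t, x ^ (Fintype.card B) ^ m

set_option linter.unusedSectionVars false
set_option maxHeartbeats 1000000

open Polynomial Finset

section helpers
variable {B F : Type*} [Field B] [Field F] [Fintype B] [Fintype F] [Algebra B F]

lemma ft_pow_card {t : ℕ} (hcard : Fintype.card F = Fintype.card B ^ t)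
    (x : F) : (fieldTrace B t x) ^ Fintype.card B = fieldTrace B t x := by
  obtain ⟨p, hc⟩ := CharP.exists B
  haveI := hc
  obtain ⟨s, hps, hcardB⟩ := FiniteField.card B p
  haveI : Fact p.Prime := ⟨hps⟩
  haveI : CharP F p := charP_of_injective_algebraMap (algebraMap B F).injective p
  set q := Fintype.card B with hq
  have ht0 : 0 < t := by
    rcases Nat.eq_zero_or_pos t with h | h
    · exfalso
      have := Fintype.one_lt_card (α := F)
      rw [hcard, h, pow_zero] at this; omega
    · exact h
  have h1 : (fieldTrace B t x) ^ q = ∑ m ∈ Finset.range t, x ^ q ^ (m + 1) := by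
    rw [fieldTrace, hcardB, sum_pow_char_pow]
    refine Finset.sum_congr rfl fun m _ => ?_
    rw [← pow_mul, ← hcardB, ← pow_succ]
  rw [h1, fieldTrace]
  have h2 : ∑ m ∈ Finset.range (t + 1), x ^ q ^ m
      = (∑ m ∈ Finset.range t, x ^ q ^ (m + 1)) + x ^ q ^ 0 :=
    Finset.sum_range_succ' _ t
  have h3 : ∑ m ∈ Finset.range (t + 1), x ^ q ^ m
      = (∑ m ∈ Finset.range t, x ^ q ^ m) + x ^ q ^ t :=
    Finset.sum_range_succ _ t
  have h4 : x ^ q ^ t = x := by rw [← hcard]; exact FiniteField.pow_card x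
  have h5 : x ^ q ^ 0 = x := by rw [pow_zero, pow_one]
  rw [h4] at h3
  rw [h5] at h2
  exact add_right_cancel (h2.symm.trans h3)

lemma mem_range_of_pow_card_eq {x : F} (hx : x ^ Fintype.card B = x) :
    ∃ b : B, algebraMap B F b = x := by
  classical
  set q := Fintype.card B with hq
  have hq1 : 1 < q := Fintype.one_lt_card
  set P : F[X] := X ^ q - X with hP
  have hP0 : P ≠ 0 := FiniteField.X_pow_card_sub_X_ne_zero F hq1
  have hdeg : P.natDegree = q := FiniteField.X_pow_card_sub_X_natDegree_eq F hq1
  have hroot : ∀ y : F, y ^ q = y → y ∈ P.roots.toFinset := by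
    intro y hy
    rw [Multiset.mem_toFinset, mem_roots hP0]
    simp [P, IsRoot.def, hy]
  have himg : (Finset.univ.image (algebraMap B F)) ⊆ P.roots.toFinset := by
    intro y hy
    simp only [Finset.mem_image, Finset.mem_univ, true_and] at hy
    obtain ⟨b, rfl⟩ := hy
    exact hroot _ (by rw [← map_pow, FiniteField.pow_card])
  have hcard1 : (Finset.univ.image (algebraMap B F)).card = q := by
    rw [Finset.card_image_of_injective _ (algebraMap B F).injective, Finset.card_univ]
  have hcard2 : P.roots.toFinset.card ≤ q := by
    calc P.roots.toFinset.card ≤ Multiset.card P.roots := Multiset.toFinset_card_le _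
      _ ≤ P.natDegree := P.card_roots'
      _ = q := hdeg
  have heq : Finset.univ.image (algebraMap B F) = P.roots.toFinset :=
    Finset.eq_of_subset_of_card_le himg (by omega)
  have hxmem : x ∈ P.roots.toFinset := hroot x hx
  rw [← heq] at hxmem
  simp only [Finset.mem_image, Finset.mem_univ, true_and] at hxmem
  exact hxmem

lemma ft_add (t : ℕ) (x y : F) :
    fieldTrace B t (x + y) = fieldTrace B t x + fieldTrace B t y := by
  obtain ⟨p, hc⟩ := CharP.exists B
  haveI := hc
  obtain ⟨s, hps, hcardB⟩ := FiniteField.card B p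
  haveI : Fact p.Prime := ⟨hps⟩
  haveI : CharP F p := charP_of_injective_algebraMap (algebraMap B F).injective p
  simp only [fieldTrace, ← Finset.sum_add_distrib]
  refine Finset.sum_congr rfl fun m _ => ?_
  rw [hcardB, ← pow_mul, add_pow_char_pow]

lemma ft_smul (t : ℕ) (b : B) (x : F) :
    fieldTrace B t (algebraMap B F b * x) = algebraMap B F b * fieldTrace B t x := by
  simp only [fieldTrace, Finset.mul_sum]
  refine Finset.sum_congr rfl fun m _ => ?_
  rw [mul_pow, ← map_pow, FiniteField.pow_card_pow]

lemma ft_exists_ne_zero {t : ℕ} (hcard : Fintype.card F = Fintype.card B ^ t)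
    (ht0 : 0 < t) : ∃ z : F, fieldTrace B t z ≠ 0 := by
  by_contra h
  push_neg at h
  set q := Fintype.card B with hq
  have hq1 : 1 < q := Fintype.one_lt_card
  set P : F[X] := ∑ m ∈ Finset.range t, X ^ q ^ m with hP
  have heval : ∀ z : F, P.eval z = fieldTrace B t z := by
    intro z; simp [P, fieldTrace, eval_finset_sum]; rfl
  have hndeg : P.natDegree < Fintype.card F := by
    have h1 : P.natDegree ≤ q ^ (t - 1) := by
      refine natDegree_sum_le_of_forall_le _ _ fun m hm => ?_
      rw [natDegree_X_pow]
      exact Nat.pow_le_pow_right (by omega) (by simp at hm; omega)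
    have h2 : q ^ (t - 1) < q ^ t := Nat.pow_lt_pow_right hq1 (by omega)
    rw [hcard]; omega
  have hP0 : P = 0 := by
    apply Polynomial.eq_zero_of_forall_eval_zero_of_natDegree_lt_card
    · intro z; rw [heval]; exact h z
    · rw [Cardinal.mk_fintype]; exact_mod_cast hndeg
  have hcoeff : P.coeff (q ^ (t - 1)) = 1 := by
    rw [hP, finset_sum_coeff]
    rw [Finset.sum_eq_single (t - 1)]
    · simp
    · intro m hm hne
      rw [coeff_X_pow, if_neg]
      exact fun hcon => hne (Nat.pow_right_injective hq1 hcon.symm)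
    · intro hmem
      exact absurd (Finset.mem_range.mpr (by omega)) hmem
  rw [hP0] at hcoeff
  simp at hcoeff

lemma ft_exists_basis_ne_zero {t : ℕ} (hcard : Fintype.card F = Fintype.card B ^ t)
    (ht0 : 0 < t) (ζ : Module.Basis (Fin t) B F) {d : F} (hd : d ≠ 0) :
    ∃ w : Fin t, fieldTrace B t (ζ w * d) ≠ 0 := by
  by_contra h
  push_neg at h
  obtain ⟨z, hz⟩ := ft_exists_ne_zero hcard ht0 (B := B)
  apply hz
  have hrep : z = ∑ w, ζ.repr (z * d⁻¹) w • (ζ w * d) := by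
    have hsr := ζ.sum_repr (z * d⁻¹)
    calc z = (z * d⁻¹) * d := by field_simp
      _ = (∑ w, ζ.repr (z * d⁻¹) w • ζ w) * d := by rw [hsr]
      _ = ∑ w, ζ.repr (z * d⁻¹) w • (ζ w * d) := by
          rw [Finset.sum_mul]; simp [smul_mul_assoc]
  have hadd : ∀ (s : Finset (Fin t)) (f : Fin t → F),
      fieldTrace B t (∑ w ∈ s, f w) = ∑ w ∈ s, fieldTrace B t (f w) := by
    intro s f
    induction s using Finset.induction with
    | empty => simp [fieldTrace]
    | insert _ _ hx ih =>
        rw [Finset.sum_insert hx, ft_add, ih, Finset.sum_insert hx]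
  rw [hrep, hadd]
  refine Finset.sum_eq_zero fun w _ => ?_
  rw [Algebra.smul_def, ft_smul, h w, mul_zero]

end helpers

lemma sum_eval_eq_zero {F : Type*} [Field F] [Fintype F] {h : F[X]}
    (hd : h ≠ 0 → h.natDegree < Fintype.card F - 1) : ∑ x : F, h.eval x = 0 := by
  by_cases h0 : h = 0
  · simp [h0]
  have hd' := hd h0
  have hev : ∀ x : F, h.eval x = ∑ m ∈ Finset.range (h.natDegree + 1), h.coeff m * x ^ m :=
    fun x => eval_eq_sum_range x
  simp only [hev]
  rw [Finset.sum_comm]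
  refine Finset.sum_eq_zero fun m hm => ?_
  rw [← Finset.mul_sum,
    FiniteField.sum_pow_lt_card_sub_one (K := F) m (by simp at hm; omega), mul_zero]

/-- Let `n = |F|`, let `C ⊆ F^n` be the full-length Reed-Solomon code
of dimension `k = n - n/|B|`, fix an index `i`, a nonzero `δ ∈ F` and a basis
`ζ_1, …, ζ_t` of `F` over `B`, and let `M ∈ F^{n × t}` be given by
`M[j,w] = δ·tr(ζ_w·(α_j - α_i))/(α_j - α_i)` for `j ≠ i` and `M[i,w] = δ·ζ_w`.
Then `M` is a repair matrix for `i` with bandwidth `n - 1`: its columns lie in the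
dual code, the entries of row `i` are linearly independent over `B`, and
`∑_{j ≠ i} dim_B span_B {M j w : w} = n - 1`. -/
theorem repair_matrix_single_failure
    {B F : Type*} [Field B] [Field F] [Fintype B] [Fintype F] [Algebra B F]
    {n t : ℕ} (ht : Module.finrank B F = t)
    (hn : n = Fintype.card F)
    (α : Fin n → F) (hα : Function.Bijective α)
    (k : ℕ) (hk : k = n - n / Fintype.card B)
    (i : Fin n) (δ : F) (hδ : δ ≠ 0) (ζ : Module.Basis (Fin t) B F)
    (M : Matrix (Fin n) (Fin t) F)
    (hM : ∀ j w, M j w =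
      if j = i then δ * ζ w
      else δ * fieldTrace B t (ζ w * (α j - α i)) / (α j - α i)) :
    (∀ w : Fin t, ∀ c ∈ rsCode k α, ∑ j, c j * M j w = 0) ∧
    LinearIndependent B (M i) ∧
    (∑ j ∈ ({i} : Finset (Fin n))ᶜ,
        Module.finrank B (Submodule.span B (Set.range (M j))) = n - 1) := by
  classical
  set q := Fintype.card B with hq
  have hq1 : 1 < q := Fintype.one_lt_card
  have hcard : Fintype.card F = q ^ t := by
    rw [← ht]; exact Module.card_eq_pow_finrank
  have ht0 : 0 < t := by
    rcases Nat.eq_zero_or_pos t with h | h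
    · exfalso
      have := Fintype.one_lt_card (α := F)
      rw [hcard, h, pow_zero] at this; omega
    · exact h
  have ha1 : 1 ≤ q ^ (t - 1) := Nat.one_le_pow _ _ (by omega)
  have hnq : n = q ^ (t - 1) * q := by
    rw [hn, hcard, ← pow_succ]
    congr 1; omega
  have hdiv : n / q = q ^ (t - 1) := by
    rw [hnq, Nat.mul_div_cancel _ (by omega)]
  have hkval : k = q ^ (t - 1) * q - q ^ (t - 1) := by rw [hk, hdiv, hnq]
  refine ⟨?_, ?_, ?_⟩
  · -- columns in dual code
    intro w c hc
    obtain ⟨f, hdegf, hcf⟩ := hc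
    set g : F[X] := ∑ m ∈ Finset.range t,
      C (ζ w ^ q ^ m) * (X - C (α i)) ^ (q ^ m - 1) with hg
    have hgdeg : g.natDegree ≤ q ^ (t - 1) - 1 := by
      refine natDegree_sum_le_of_forall_le _ _ fun m hm => ?_
      calc (C (ζ w ^ q ^ m) * (X - C (α i)) ^ (q ^ m - 1)).natDegree
          ≤ ((X - C (α i)) ^ (q ^ m - 1)).natDegree := natDegree_C_mul_le _ _
        _ ≤ q ^ m - 1 := by
            rw [natDegree_pow, natDegree_X_sub_C, mul_one]
        _ ≤ q ^ (t - 1) - 1 := by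
            have : q ^ m ≤ q ^ (t - 1) :=
              Nat.pow_le_pow_right (by omega) (by simp at hm; omega)
            omega
    have hgi : g.eval (α i) = ζ w := by
      rw [hg, eval_finset_sum]
      rw [Finset.sum_eq_single_of_mem 0 (Finset.mem_range.mpr ht0)]
      · simp
      · intro m _ hm0
        have : 0 < q ^ m - 1 := by
          have : q ≤ q ^ m := Nat.le_self_pow hm0 q
          omega
        simp [sub_self, zero_pow (by omega : q ^ m - 1 ≠ 0)]
    have hMg : ∀ j, M j w = δ * g.eval (α j) := by
      intro j
      by_cases hj : j = i
      · rw [hM, if_pos hj, hj, hgi]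
      · have hd : α j - α i ≠ 0 :=
          sub_ne_zero.mpr fun hcon => hj (hα.injective hcon)
        rw [hM, if_neg hj]
        have hft : fieldTrace B t (ζ w * (α j - α i)) = g.eval (α j) * (α j - α i) := by
          rw [fieldTrace, hg, eval_finset_sum, Finset.sum_mul]
          refine Finset.sum_congr rfl fun m _ => ?_
          have hpow : (α j - α i) ^ q ^ m
              = (α j - α i) ^ (q ^ m - 1) * (α j - α i) := by
            rw [← pow_succ]
            congr 1
            have : 1 ≤ q ^ m := Nat.one_le_pow _ _ (by omega)
            omega
          rw [mul_pow, hpow]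
          simp [mul_assoc]
          exact Or.inl rfl
        rw [hft]
        field_simp
    have hsum0 : ∑ x : F, (f * g).eval x = 0 := by
      apply sum_eval_eq_zero
      intro hfg0
      obtain ⟨hf0, hg0⟩ := mul_ne_zero_iff.mp hfg0
      have hnf : f.natDegree < k := by
        rw [← Polynomial.natDegree_lt_iff_degree_lt hf0] at hdegf
        exact hdegf
      rw [natDegree_mul hf0 hg0, hcard]
      have := hq1
      have h2a : 2 ≤ q ^ (t - 1) * q := by nlinarith
      have hqt : q ^ t = q ^ (t - 1) * q := by rw [← pow_succ]; congr 1; omega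
      rw [hqt]
      omega
    calc ∑ j, c j * M j w
        = ∑ j, δ * (f * g).eval (α j) := by
          refine Finset.sum_congr rfl fun j _ => ?_
          rw [hcf j, hMg j, eval_mul]; ring
      _ = δ * ∑ j, (f * g).eval (α j) := (Finset.mul_sum _ _ _).symm
      _ = δ * ∑ x : F, (f * g).eval x := by
          congr 1
          exact hα.sum_comp (fun x => eval x (f * g))
      _ = 0 := by rw [hsum0, mul_zero]
  · -- row i linearly independent
    have hinj : Function.Injective (LinearMap.mulLeft B δ) := by
      intro x y hxy
      exact mul_left_cancel₀ hδ hxy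
    have h2 := ζ.linearIndependent.map' (LinearMap.mulLeft B δ)
      (LinearMap.ker_eq_bot.mpr hinj)
    have hMi : M i = fun w => δ * ζ w := funext fun w => by rw [hM, if_pos rfl]
    rw [hMi]
    exact h2
  · -- bandwidth
    have hrow : ∀ j : Fin n, j ≠ i →
        Module.finrank B (Submodule.span B (Set.range (M j))) = 1 := by
      intro j hj
      haveI : FiniteDimensional B F := Module.Finite.of_basis ζ
      have hd : α j - α i ≠ 0 :=
        sub_ne_zero.mpr fun hcon => hj (hα.injective hcon)
      set v : F := δ / (α j - α i) with hv
      have hv0 : v ≠ 0 := div_ne_zero hδ hd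
      have hbw : ∀ w : Fin t, ∃ b : B,
          algebraMap B F b = fieldTrace B t (ζ w * (α j - α i)) :=
        fun w => mem_range_of_pow_card_eq (ft_pow_card hcard _)
      have hMv : ∀ w : Fin t, ∀ b : B,
          algebraMap B F b = fieldTrace B t (ζ w * (α j - α i)) → M j w = b • v := by
        intro w b hb
        rw [hM, if_neg hj, ← hb, Algebra.smul_def, hv]
        ring
      have hmem : ∀ w, M j w ∈ Submodule.span B ({v} : Set F) := by
        intro w
        obtain ⟨b, hb⟩ := hbw w
        rw [Submodule.mem_span_singleton]
        exact ⟨b, (hMv w b hb).symm⟩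
      have hle : Submodule.span B (Set.range (M j)) ≤ Submodule.span B {v} := by
        rw [Submodule.span_le]
        rintro _ ⟨w, rfl⟩
        exact hmem w
      obtain ⟨w₀, hw₀⟩ := ft_exists_basis_ne_zero hcard ht0 ζ hd
      obtain ⟨b₀, hb₀⟩ := hbw w₀
      have hb₀0 : b₀ ≠ 0 := by
        intro hcon
        rw [hcon, map_zero] at hb₀
        exact hw₀ hb₀.symm
      have hvmem : v ∈ Submodule.span B (Set.range (M j)) := by
        have h1 : M j w₀ ∈ Submodule.span B (Set.range (M j)) :=
          Submodule.subset_span (Set.mem_range_self w₀)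
        have h2 : v = b₀⁻¹ • M j w₀ := by
          rw [hMv w₀ b₀ hb₀, smul_smul, inv_mul_cancel₀ hb₀0, one_smul]
        rw [h2]
        exact Submodule.smul_mem _ _ h1
      have heq : Submodule.span B (Set.range (M j)) = Submodule.span B {v} :=
        le_antisymm hle ((Submodule.span_singleton_le_iff_mem _ _).mpr hvmem)
      rw [heq, finrank_span_singleton hv0]
    calc ∑ j ∈ ({i} : Finset (Fin n))ᶜ,
          Module.finrank B (Submodule.span B (Set.range (M j)))
        = ∑ _j ∈ ({i} : Finset (Fin n))ᶜ, 1 := by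
          refine Finset.sum_congr rfl fun j hj => ?_
          exact hrow j (by simpa using hj)
      _ = ({i} : Finset (Fin n))ᶜ.card := by simp
      _ = n - 1 := by rw [Finset.card_compl]; simp
end

section
/- Let q = |B| and let L(X) = Σ_{m=0}^{s} c_m·X^{q^m} ∈ F[X] with c_0,...,c_s ∈ F. Let α_i, for i in an index set I of size r, be distinct elements of F, set F_I(X) = ∏_{i∈I}(X − α_i), and fix ζ ∈ F and an integer p with 1 ≤ p ≤ r. Then F_I(X) divides L(ζ·F_I(X)·X^{p−1}) in F[X], the quotient equals P(X) = Σ_{m=0}^{s} c_m·ζ^{q^m}·F_I(X)^{q^m−1}·X^{(p−1)·q^m}, the degree of P is at most q^s·(2r−1) − r, and P(α_i) = c_0·ζ·α_i^{p−1} for every i ∈ I. -/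
open Polynomial

lemma linearized_aux_arith {A Bd r p : ℕ} (hA : 1 ≤ A) (hAB : A ≤ Bd)
    (hr : 1 ≤ r) (hp1 : 1 ≤ p) (hpr : p ≤ r) :
    (A - 1) * r + (p - 1) * A ≤ Bd * (2 * r - 1) - r := by
  obtain ⟨a, rfl⟩ := Nat.exists_eq_add_of_le hA
  obtain ⟨b, rfl⟩ := Nat.exists_eq_add_of_le hr
  obtain ⟨d, rfl⟩ := Nat.exists_eq_add_of_le hp1
  obtain ⟨e, rfl⟩ := Nat.exists_eq_add_of_le hAB
  have hdb : d ≤ b := by omega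
  have h1 : 2 * (1 + b) - 1 = 1 + 2 * b := by omega
  have h2 : 1 + a - 1 = a := by omega
  have h3 : 1 + d - 1 = d := by omega
  rw [h1, h2, h3, Nat.le_sub_iff_add_le (by nlinarith)]
  nlinarith

/-- Let `q = |B|`, `L(X) = ∑_{m=0}^s c_m X^{q^m}`, `F_I(X) =
∏_{i∈I}(X - α_i)` with the `α_i` distinct, `|I| = r ≥ 1`, `ζ ∈ F`, and `1 ≤ p ≤ r`.
Then `F_I(X)` divides `L(ζ·F_I(X)·X^{p-1})`, the quotient equals
`P(X) = ∑_{m=0}^s c_m ζ^{q^m} F_I(X)^{q^m - 1} X^{(p-1)q^m}`, `deg P ≤ q^s(2r-1) - r`,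
and `P(α_i) = c_0 · ζ · α_i^{p-1}` for every `i ∈ I`. -/
theorem linearized_composition_divisibility
    {B F : Type*} [Field B] [Field F] [Fintype B] [Algebra B F]
    {s r p : ℕ} (hr : 1 ≤ r) (hp1 : 1 ≤ p) (hpr : p ≤ r)
    (c : ℕ → F) (α : Fin r → F) (hα : Function.Injective α) (ζ : F) :
    let q := Fintype.card B
    let FI : Polynomial F := ∏ i, (X - C (α i))
    let L : Polynomial F := ∑ m ∈ Finset.range (s + 1), C (c m) * X ^ q ^ m
    let P : Polynomial F := ∑ m ∈ Finset.range (s + 1),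
      C (c m * ζ ^ q ^ m) * FI ^ (q ^ m - 1) * X ^ ((p - 1) * q ^ m)
    FI ∣ L.comp (C ζ * FI * X ^ (p - 1)) ∧
    L.comp (C ζ * FI * X ^ (p - 1)) = FI * P ∧
    P.natDegree ≤ q ^ s * (2 * r - 1) - r ∧
    ∀ i : Fin r, P.eval (α i) = c 0 * ζ * (α i) ^ (p - 1) := by
  intro q FI L P
  have hq : 2 ≤ q := Fintype.one_lt_card
  have hqm : ∀ m : ℕ, 1 ≤ q ^ m := fun m => Nat.one_le_pow _ _ (by omega)
  have hFIdeg : FI.natDegree = r := by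
    show (∏ i, (X - C (α i))).natDegree = r
    rw [Polynomial.natDegree_prod_of_monic _ _ (fun i _ => monic_X_sub_C _)]
    simp
  have key : L.comp (C ζ * FI * X ^ (p - 1)) = FI * P := by
    show (∑ m ∈ Finset.range (s + 1), C (c m) * X ^ q ^ m).comp _ = FI * _
    rw [Polynomial.sum_comp, Finset.mul_sum]
    refine Finset.sum_congr rfl fun m _ => ?_
    rw [Polynomial.mul_comp, Polynomial.C_comp, Polynomial.pow_comp,
      Polynomial.X_comp]
    have h1 : (C ζ * FI * X ^ (p - 1)) ^ q ^ m
        = C (ζ ^ q ^ m) * FI ^ q ^ m * X ^ ((p - 1) * q ^ m) := by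
      rw [mul_pow, mul_pow, ← C_pow, ← pow_mul]
    have h2 : FI ^ q ^ m = FI * FI ^ (q ^ m - 1) := by
      rw [← pow_succ']
      congr 1
      have := hqm m
      omega
    rw [h1, h2, C_mul]
    ring
  refine ⟨⟨P, key⟩, key, ?_, ?_⟩
  · refine (Polynomial.natDegree_sum_le _ _).trans ?_
    rw [Finset.fold_max_le]
    refine ⟨Nat.zero_le _, fun m hm => ?_⟩
    simp only [Finset.mem_range] at hm
    have hterm : (C (c m * ζ ^ q ^ m) * FI ^ (q ^ m - 1) *
        X ^ ((p - 1) * q ^ m)).natDegree ≤ (q ^ m - 1) * r + (p - 1) * q ^ m := by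
      refine Polynomial.natDegree_mul_le.trans (add_le_add
        (Polynomial.natDegree_mul_le.trans ?_) (Polynomial.natDegree_X_pow _).le)
      calc (C (c m * ζ ^ q ^ m)).natDegree + (FI ^ (q ^ m - 1)).natDegree
          ≤ 0 + (q ^ m - 1) * r := by
            rw [Polynomial.natDegree_C, Polynomial.natDegree_pow, hFIdeg]
        _ = (q ^ m - 1) * r := by omega
    have hmle : q ^ m ≤ q ^ s := Nat.pow_le_pow_right (by omega) (by omega)
    exact hterm.trans (linearized_aux_arith (hqm m) hmle hr hp1 hpr)
  · intro i
    have hFIeval : FI.eval (α i) = 0 := by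
      show ((∏ j, (X - C (α j)) : Polynomial F)).eval (α i) = 0
      rw [Polynomial.eval_prod]
      exact Finset.prod_eq_zero (Finset.mem_univ i) (by simp)
    rw [show P = ∑ m ∈ Finset.range (s + 1),
        C (c m * ζ ^ q ^ m) * FI ^ (q ^ m - 1) * X ^ ((p - 1) * q ^ m) from rfl,
      Polynomial.eval_finset_sum, Finset.sum_eq_single 0]
    · simp [mul_assoc]
    · intro m _ hm0
      have h2 : 1 < q ^ m := Nat.one_lt_pow hm0 (by omega)
      simp [hFIeval, zero_pow (by omega : q ^ m - 1 ≠ 0)]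
    · simp
end

section
/- Let ζ_1,...,ζ_t be a basis of F over B, let c ∈ F be nonzero, let λ_1,...,λ_r ∈ F be nonzero, and let β_1,...,β_r be distinct elements of F. Define A ∈ F^{r×rt} with rows indexed by i ∈ {1,...,r} and columns indexed by pairs (w,p) with 1 ≤ w ≤ t, 1 ≤ p ≤ r, via A[i,(w,p)] = λ_i·c·ζ_w·β_i^{p−1}. Then for every nonzero x ∈ B^{rt} there exists i ∈ {1,...,r} such that Σ_{(w,p)} A[i,(w,p)]·x_{(w,p)} ≠ 0; that is, A·x ≠ 0 for all nonzero x ∈ B^{rt}. -/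
/-- Let `ζ_1, …, ζ_t` be a basis of `F` over `B`, `c ≠ 0`,
`λ_1, …, λ_r ≠ 0`, and `β_1, …, β_r` distinct elements of `F`. If
`A[i,(w,p)] = λ_i · c · ζ_w · β_i^{p-1}` then `A·x ≠ 0` for every nonzero
`x ∈ B^{rt}`: there is a row `i` with `∑_{(w,p)} A[i,(w,p)]·x_{(w,p)} ≠ 0`. -/
theorem vandermonde_block_full_rank
    {B F : Type*} [Field B] [Field F] [Fintype B] [Fintype F] [Algebra B F]
    {t r : ℕ} (ht : Module.finrank B F = t)
    (ζ : Module.Basis (Fin t) B F) (c : F) (hc : c ≠ 0)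
    (lam : Fin r → F) (hlam : ∀ i, lam i ≠ 0)
    (β : Fin r → F) (hβ : Function.Injective β)
    (A : Fin r → Fin t × Fin r → F)
    (hA : ∀ (i : Fin r) (w : Fin t) (p : Fin r),
      A i (w, p) = lam i * c * ζ w * β i ^ (p : ℕ)) :
    ∀ x : Fin t × Fin r → B, x ≠ 0 →
      ∃ i : Fin r, ∑ wp, A i wp * algebraMap B F (x wp) ≠ 0 := by
  intro x hx
  classical
  -- y p = ∑ w, x (w,p) • ζ w
  set y : Fin r → F := fun p => ∑ w, algebraMap B F (x (w, p)) * ζ w with hy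
  set Q : Polynomial F := ∑ p : Fin r, Polynomial.C (y p) * Polynomial.X ^ (p : ℕ)
    with hQ
  -- Q's coefficients
  have hcoeff : ∀ p : Fin r, Q.coeff (p : ℕ) = y p := by
    intro p
    simp only [hQ, Polynomial.finset_sum_coeff, Polynomial.coeff_C_mul,
      Polynomial.coeff_X_pow]
    rw [Finset.sum_eq_single p]
    · simp
    · intro q _ hq
      have h2 : (q : ℕ) ≠ (p : ℕ) := fun h => hq (Fin.ext h)
      rw [if_neg (Ne.symm h2), mul_zero]
    · simp
  -- Q ≠ 0
  have hQne : Q ≠ 0 := by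
    intro h
    apply hx
    funext wp
    obtain ⟨w, p⟩ := wp
    have hyp : y p = 0 := by rw [← hcoeff p, h, Polynomial.coeff_zero]
    have : ∑ w, x (w, p) • ζ w = 0 := by
      rw [← hyp, hy]
      simp [Algebra.smul_def]
    have hlin := ζ.linearIndependent
    rw [Fintype.linearIndependent_iff] at hlin
    exact hlin (fun w => x (w, p)) this w
  -- suppose all row sums vanish
  by_contra hall
  push_neg at hall
  have heval : ∀ i : Fin r, Q.eval (β i) = 0 := by
    intro i
    have h0 := hall i
    have hsum : ∑ wp : Fin t × Fin r, A i wp * algebraMap B F (x wp)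
        = lam i * c * Q.eval (β i) := by
      rw [hQ, Fintype.sum_prod_type]
      simp only [Polynomial.eval_finset_sum, Polynomial.eval_mul,
        Polynomial.eval_C, Polynomial.eval_pow, Polynomial.eval_X,
        Finset.mul_sum]
      rw [Finset.sum_comm]
      refine Finset.sum_congr rfl fun p _ => ?_
      rw [hy]
      simp only [Finset.sum_mul]
      rw [Finset.mul_sum]
      refine Finset.sum_congr rfl fun w _ => ?_
      rw [hA i w p]
      ring
    rw [hsum] at h0
    rcases mul_eq_zero.mp h0 with h | h
    · exact absurd h (mul_ne_zero (hlam i) hc)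
    · exact h
  have hdeg : Q.natDegree < Fintype.card (Fin r) := by
    rw [Fintype.card_fin]
    have hr : 0 < r := by
      rcases Nat.eq_zero_or_pos r with h | h
      · exfalso; apply hQne; subst h; simp [hQ]
      · exact h
    have : Q.natDegree ≤ r - 1 := by
      apply Polynomial.natDegree_sum_le_of_forall_le
      intro p _
      calc (Polynomial.C (y p) * Polynomial.X ^ (p : ℕ)).natDegree
          ≤ (p : ℕ) := Polynomial.natDegree_C_mul_X_pow_le _ _
        _ ≤ r - 1 := Nat.le_sub_one_of_lt p.isLt
    omega
  exact hQne (Polynomial.eq_zero_of_natDegree_lt_card_of_eval_eq_zero Q hβ heval hdeg)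
end

section
/- Let r ≥ 1 and let M ∈ F^{r×rt} be a matrix over F. Define the B-linear map ψ : B^{rt} → F^r by ψ(y) = M·y, and the B-linear map φ : F^r → B^{rt} by φ(x)_ℓ = tr_{F/B}(Σ_{i=1}^r x_i·M[i,ℓ]) for 1 ≤ ℓ ≤ rt. If ψ is injective, then φ is bijective. -/
/-- Let `M ∈ F^{r × rt}` and define the `B`-linear maps
`ψ : B^{rt} → F^r`, `ψ(y) = M·y`, and `φ : F^r → B^{rt}`,
`φ(x)_ℓ = tr_{F/B}(∑_i x_i · M[i,ℓ])`. If `ψ` is injective, then `φ` is bijective. -/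
theorem adjoint_trace_map_bijective
    {B F : Type*} [Field B] [Field F] [Fintype B] [Fintype F] [Algebra B F]
    {t r : ℕ} (ht : Module.finrank B F = t) (hr : 1 ≤ r)
    (M : Matrix (Fin r) (Fin (r * t)) F)
    (hψ : Function.Injective (fun y : Fin (r * t) → B =>
      fun i : Fin r => ∑ ℓ, M i ℓ * algebraMap B F (y ℓ))) :
    Function.Bijective (fun x : Fin r → F =>
      fun ℓ : Fin (r * t) => Algebra.trace B F (∑ i, x i * M i ℓ)) := by
  classical
  -- φ as a B-linear map
  set φ : (Fin r → F) →ₗ[B] (Fin (r * t) → B) :=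
    LinearMap.pi (fun ℓ => (Algebra.trace B F).comp
      ((∑ i : Fin r, (LinearMap.toSpanSingleton F F (M i ℓ)).comp
        (LinearMap.proj i)).restrictScalars B)) with hφdef
  have hφ : (fun x : Fin r → F =>
      fun ℓ : Fin (r * t) => Algebra.trace B F (∑ i, x i * M i ℓ)) = ⇑φ := by
    funext x ℓ
    simp [φ, LinearMap.pi_apply, LinearMap.sum_apply, LinearMap.toSpanSingleton_apply,
      smul_eq_mul, mul_comm]
  -- ψ as a B-linear map
  set ψ : (Fin (r * t) → B) →ₗ[B] (Fin r → F) :=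
    LinearMap.pi (fun i => ∑ ℓ : Fin (r * t),
      (LinearMap.toSpanSingleton B F (M i ℓ)).comp (LinearMap.proj ℓ)) with hψdef
  have hψeq : (fun y : Fin (r * t) → B =>
      fun i : Fin r => ∑ ℓ, M i ℓ * algebraMap B F (y ℓ)) = ⇑ψ := by
    funext y i
    simp [ψ, LinearMap.pi_apply, LinearMap.sum_apply, LinearMap.toSpanSingleton_apply,
      Algebra.smul_def, mul_comm]
  rw [hψeq] at hψ
  -- dimensions
  have hdim1 : Module.finrank B (Fin r → F) = r * t := by
    simp [Module.finrank_pi_fintype, ht, Finset.sum_const, mul_comm]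
  have hdim2 : Module.finrank B (Fin (r * t) → B) = r * t := by
    simp [Module.finrank_pi]
  -- ψ is surjective
  have hψsurj : Function.Surjective ψ :=
    (LinearMap.injective_iff_surjective_of_finrank_eq_finrank (by rw [hdim2, hdim1])).mp hψ
  rw [hφ]
  rw [Function.Bijective]
  have hinj : Function.Injective φ := by
    rw [← LinearMap.ker_eq_bot, LinearMap.ker_eq_bot']
    intro x hx
    have hx' : ∀ ℓ, Algebra.trace B F (∑ i, x i * M i ℓ) = 0 := by
      intro ℓ
      have := congrFun (congrArg (fun f => f) hx) ℓ
      have := congrFun hx ℓ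
      simpa [φ, LinearMap.pi_apply, LinearMap.sum_apply, LinearMap.toSpanSingleton_apply,
        smul_eq_mul, mul_comm] using this
    funext i
    have key : ∀ c : F, Algebra.trace B F (x i * c) = 0 := by
      intro c
      obtain ⟨y, hy⟩ := hψsurj (Pi.single i c : Fin r → F)
      have hyc : ∑ ℓ, M i ℓ * algebraMap B F (y ℓ) = c := by
        have := congrFun hy i
        simpa [ψ, LinearMap.pi_apply, LinearMap.sum_apply, LinearMap.toSpanSingleton_apply,
          Algebra.smul_def, mul_comm] using this
      -- moreover for j ≠ i, ∑ ℓ, M j ℓ * alg (y ℓ) = 0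
      have hz : ∀ j, ∑ ℓ, M j ℓ * algebraMap B F (y ℓ) = (Pi.single i c : Fin r → F) j := by
        intro j
        have := congrFun hy j
        simpa [ψ, LinearMap.pi_apply, LinearMap.sum_apply, LinearMap.toSpanSingleton_apply,
          Algebra.smul_def, mul_comm] using this
      have expand : x i * c = ∑ j, x j * (Pi.single i c : Fin r → F) j := by
        simp [Pi.single_apply, Finset.sum_ite_eq', mul_comm]
      rw [expand]
      have : (∑ j, x j * (Pi.single i c : Fin r → F) j)
          = ∑ ℓ, algebraMap B F (y ℓ) * ∑ j, x j * M j ℓ := by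
        calc ∑ j, x j * (Pi.single i c : Fin r → F) j
            = ∑ j, x j * ∑ ℓ, M j ℓ * algebraMap B F (y ℓ) := by
              simp_rw [hz]
          _ = ∑ j, ∑ ℓ, algebraMap B F (y ℓ) * (x j * M j ℓ) := by
              congr 1; funext j; rw [Finset.mul_sum]; congr 1; funext ℓ; ring
          _ = ∑ ℓ, algebraMap B F (y ℓ) * ∑ j, x j * M j ℓ := by
              rw [Finset.sum_comm]; simp_rw [Finset.mul_sum]
      rw [this, map_sum]
      refine Finset.sum_eq_zero fun ℓ _ => ?_
      rw [← Algebra.smul_def, map_smul, hx' ℓ, smul_zero]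
    have := (traceForm_nondegenerate B F).1 (x i) (fun c => by
      simpa [Algebra.traceForm_apply] using key c)
    simpa using this
  exact ⟨hinj, (LinearMap.injective_iff_surjective_of_finrank_eq_finrank (by rw [hdim1, hdim2])).mp hinj⟩
end

section
/- Let A ∈ F^{r×m}, let i ≠ j be indices in {1,...,r}, and let γ ∈ F be nonzero. Define f_γ : F → F by f_γ(x) = γ·tr_{F/B}(x/γ), and let A' ∈ F^{r×m} be the matrix with A'[j,w] = A[j,w] + f_γ(A[i,w]) for all w, and A'[ℓ,w] = A[ℓ,w] for all ℓ ≠ j. Then {(tr_{F/B}(Σ_{ℓ=1}^r x_ℓ·A[ℓ,w]))_{w∈{1,...,m}} : x ∈ F^r} = {(tr_{F/B}(Σ_{ℓ=1}^r x_ℓ·A'[ℓ,w]))_{w∈{1,...,m}} : x ∈ F^r} as subsets of B^m. -/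
lemma row_op_core
    {B F : Type*} [Field B] [Field F] [Fintype B] [Fintype F] [Algebra B F]
    {r m : ℕ}
    (A A' : Matrix (Fin r) (Fin m) F) (i j : Fin r) (hij : i ≠ j)
    (γ : F) (hγ : γ ≠ 0)
    (hA'j : ∀ w, A' j w = A j w + γ * algebraMap B F (Algebra.trace B F (A i w / γ)))
    (hA' : ∀ ℓ, ℓ ≠ j → ∀ w, A' ℓ w = A ℓ w)
    (x : Fin r → F) (w : Fin m) :
    Algebra.trace B F (∑ ℓ, x ℓ * A' ℓ w) =
      Algebra.trace B F (∑ ℓ,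
        (Function.update x i (x i + algebraMap B F (Algebra.trace B F (x j * γ)) / γ)) ℓ
          * A ℓ w) := by
  set c : B := Algebra.trace B F (A i w / γ) with hc
  set b : B := Algebra.trace B F (x j * γ) with hb
  have h1 : ∑ ℓ, x ℓ * A' ℓ w
      = (∑ ℓ, x ℓ * A ℓ w) + x j * (γ * algebraMap B F c) := by
    have : ∀ ℓ ∈ Finset.univ, x ℓ * A' ℓ w
        = x ℓ * A ℓ w + (if ℓ = j then x j * (γ * algebraMap B F c) else 0) := by
      intro ℓ _
      by_cases h : ℓ = j
      · subst h; rw [hA'j, if_pos rfl]; ring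
      · rw [hA' ℓ h, if_neg h, add_zero]
    rw [Finset.sum_congr rfl this, Finset.sum_add_distrib, Finset.sum_ite_eq']
    simp
  have h2 : ∑ ℓ, (Function.update x i (x i + algebraMap B F b / γ)) ℓ * A ℓ w
      = (∑ ℓ, x ℓ * A ℓ w) + (algebraMap B F b / γ) * A i w := by
    have : ∀ ℓ ∈ Finset.univ,
        (Function.update x i (x i + algebraMap B F b / γ)) ℓ * A ℓ w
        = x ℓ * A ℓ w + (if ℓ = i then (algebraMap B F b / γ) * A i w else 0) := by
      intro ℓ _
      by_cases h : ℓ = i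
      · subst h; rw [Function.update_self, if_pos rfl]; ring
      · rw [Function.update_of_ne h, if_neg h, add_zero]
    rw [Finset.sum_congr rfl this, Finset.sum_add_distrib, Finset.sum_ite_eq']
    simp
  rw [h1, h2, map_add, map_add]
  congr 1
  have e1 : x j * (γ * algebraMap B F c) = c • (x j * γ) := by
    rw [Algebra.smul_def]; ring
  have e2 : (algebraMap B F b / γ) * A i w = b • (A i w / γ) := by
    rw [Algebra.smul_def]; field_simp
  rw [e1, e2, map_smul, map_smul, smul_eq_mul, smul_eq_mul, ← hb, ← hc, mul_comm]

/-- Let `A ∈ F^{r × m}`, `i ≠ j`, `γ ≠ 0`, and let `A'` be obtained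
from `A` by adding `f_γ(A[i,:])` to row `j`, where `f_γ(x) = γ·tr_{F/B}(x/γ)`. Then
`{(tr(∑_ℓ x_ℓ A[ℓ,w]))_w : x ∈ F^r} = {(tr(∑_ℓ x_ℓ A'[ℓ,w]))_w : x ∈ F^r}` as subsets
of `B^m`. -/
theorem row_operation_preserves_trace_image
    {B F : Type*} [Field B] [Field F] [Fintype B] [Fintype F] [Algebra B F]
    {t r m : ℕ} (ht : Module.finrank B F = t)
    (A A' : Matrix (Fin r) (Fin m) F) (i j : Fin r) (hij : i ≠ j)
    (γ : F) (hγ : γ ≠ 0)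
    (hA'j : ∀ w, A' j w = A j w + γ * algebraMap B F (Algebra.trace B F (A i w / γ)))
    (hA' : ∀ ℓ, ℓ ≠ j → ∀ w, A' ℓ w = A ℓ w) :
    Set.range (fun x : Fin r → F =>
        fun w : Fin m => Algebra.trace B F (∑ ℓ, x ℓ * A ℓ w)) =
      Set.range (fun x : Fin r → F =>
        fun w : Fin m => Algebra.trace B F (∑ ℓ, x ℓ * A' ℓ w)) := by
  have core := row_op_core A A' i j hij γ hγ hA'j hA'
  ext y
  simp only [Set.mem_range]
  constructor
  · rintro ⟨x, rfl⟩
    refine ⟨Function.update x i (x i - algebraMap B F (Algebra.trace B F (x j * γ)) / γ), ?_⟩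
    funext w
    rw [core]
    congr 1
    apply Finset.sum_congr rfl
    intro ℓ _
    congr 1
    by_cases h : ℓ = i
    · subst h
      simp [Function.update_self, Function.update_of_ne (Ne.symm hij)]
    · simp [Function.update_of_ne h]
  · rintro ⟨x, rfl⟩
    exact ⟨Function.update x i (x i + algebraMap B F (Algebra.trace B F (x j * γ)) / γ),
      (funext fun w => (core x w).symm)⟩
end

section
/- Let α_1,...,α_r be distinct elements of F, let 2 ≤ ℓ ≤ r, and let δ_1,...,δ_{ℓ−1} ∈ F be nonzero. Assume t ≥ (ℓ−1)·r − ℓ(ℓ−1)/2. Then the set D = {δ ∈ F \ {0} : tr_{F/B}((δ/δ_j)·(α_s − α_j)/(α_j − α_ℓ)) = 0 for all 1 ≤ j ≤ ℓ−1 and all s with j < s ≤ r} has cardinality at least |B|^{t − (ℓ−1)·r + ℓ(ℓ−1)/2} − 1. -/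
open Finset

section Aux

variable (B : Type*) {F : Type*} [Field B] [Field F] [Fintype B] [Fintype F] [Algebra B F]

/-- fixed points of the q-power map lie in the image of `B`. -/
lemma mem_algebraMap_range_of_pow_card {y : F} (hy : y ^ Fintype.card B = y) :
    ∃ b : B, algebraMap B F b = y := by
  classical
  set q := Fintype.card B with hq
  have hq1 : 1 < q := Fintype.one_lt_card
  set f : Polynomial F := Polynomial.X ^ q - Polynomial.X with hf
  have hf0 : f ≠ 0 := FiniteField.X_pow_card_sub_X_ne_zero F hq1
  have hdeg : f.natDegree = q := FiniteField.X_pow_card_sub_X_natDegree_eq F hq1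
  set S : Finset F := Finset.univ.image (algebraMap B F) with hS
  have hScard : S.card = q := by
    rw [hS, Finset.card_image_of_injective _ (algebraMap B F).injective, Finset.card_univ]
  set T : Finset F := f.roots.toFinset with hT
  have hST : S ⊆ T := by
    intro z hz
    simp only [hS, Finset.mem_image] at hz
    obtain ⟨b, -, rfl⟩ := hz
    rw [hT, Multiset.mem_toFinset, Polynomial.mem_roots hf0]
    simp only [hf, Polynomial.IsRoot, Polynomial.eval_sub, Polynomial.eval_pow,
      Polynomial.eval_X, sub_eq_zero, ← map_pow, hq]
    rw [FiniteField.pow_card]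
  have hTcard : T.card ≤ q := by
    calc T.card ≤ Multiset.card f.roots := Multiset.toFinset_card_le _
    _ ≤ f.natDegree := Polynomial.card_roots' f
    _ = q := hdeg
  have hTS : T = S := (Finset.eq_of_subset_of_card_le hST (hScard ▸ hTcard)).symm
  have hyT : y ∈ T := by
    rw [hT, Multiset.mem_toFinset, Polynomial.mem_roots hf0]
    simp [hf, Polynomial.IsRoot, sub_eq_zero, hy]
  rw [hTS, hS, Finset.mem_image] at hyT
  obtain ⟨b, -, hb⟩ := hyT
  exact ⟨b, hb⟩

/-- `x ↦ x ^ q ^ m` as a `B`-linear map. -/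
noncomputable def frobPow (m : ℕ) : F →ₗ[B] F where
  toFun x := x ^ (Fintype.card B) ^ m
  map_add' x y := by
    obtain ⟨n, hp, hcard⟩ := FiniteField.card B (ringChar B)
    haveI : Fact (ringChar B).Prime := ⟨hp⟩
    haveI : CharP F (ringChar B) :=
      charP_of_injective_algebraMap (algebraMap B F).injective (ringChar B)
    rw [hcard, ← pow_mul]
    apply add_pow_char_pow
  map_smul' c x := by
    simp only [Algebra.smul_def, mul_pow, RingHom.id_apply, ← map_pow,
      FiniteField.pow_card_pow]

lemma frobPow_apply (m : ℕ) (x : F) : frobPow B m x = x ^ (Fintype.card B) ^ m := rfl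

/-- the trace as a linear map. -/
noncomputable def traceLM (t : ℕ) : F →ₗ[B] F := ∑ m ∈ Finset.range t, frobPow B m

lemma traceLM_apply (t : ℕ) (x : F) : traceLM B t x = fieldTrace B t x := by
  simp [traceLM, fieldTrace, LinearMap.sum_apply, frobPow_apply]

lemma traceLM_mem_range {t : ℕ} (ht : Module.finrank B F = t) (x : F) :
    ∃ b : B, algebraMap B F b = traceLM B t x := by
  apply mem_algebraMap_range_of_pow_card
  have ht0 : 0 < t := ht ▸ Module.finrank_pos
  obtain ⟨n, hp, hcard⟩ := FiniteField.card B (ringChar B)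
  haveI : Fact (ringChar B).Prime := ⟨hp⟩
  haveI : CharP F (ringChar B) :=
    charP_of_injective_algebraMap (algebraMap B F).injective (ringChar B)
  have hxt : x ^ (Fintype.card B) ^ t = x := by
    have hcardF : Fintype.card F = (Fintype.card B) ^ t := by
      rw [← ht]; exact Module.card_eq_pow_finrank
    rw [← hcardF]; exact FiniteField.pow_card x
  calc (traceLM B t x) ^ Fintype.card B
      = ∑ m ∈ Finset.range t, (x ^ (Fintype.card B) ^ m) ^ Fintype.card B := by
        rw [traceLM_apply]
        unfold fieldTrace
        have h := sum_pow_char_pow (p := ringChar B) (n := (n : ℕ)) (Finset.range t)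
          (fun m => x ^ (Fintype.card B) ^ m)
        rw [← hcard] at h
        exact h
    _ = ∑ m ∈ Finset.range t, x ^ (Fintype.card B) ^ (m + 1) := by
        refine Finset.sum_congr rfl fun m _ => ?_
        rw [← pow_mul, ← pow_succ]
    _ = traceLM B t x := by
        rw [traceLM_apply]
        unfold fieldTrace
        obtain ⟨u, rfl⟩ : ∃ u, t = u + 1 := ⟨t - 1, by omega⟩
        rw [Finset.sum_range_succ (fun m => x ^ (Fintype.card B) ^ (m + 1)) u,
          Finset.sum_range_succ' (fun m => x ^ (Fintype.card B) ^ m) u]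
        simp [hxt]

end Aux

section Rank

variable (B : Type*) {F : Type*} [Field B] [Field F] [Fintype B] [Fintype F] [Algebra B F]

lemma finrank_ker_cond {t : ℕ} (ht : Module.finrank B F = t) (c : F) :
    t ≤ Module.finrank B
      ↥(LinearMap.ker ((traceLM B t) ∘ₗ (LinearMap.mulLeft B c))) + 1 := by
  set L := (traceLM B t) ∘ₗ (LinearMap.mulLeft B c) with hL
  have hrange : LinearMap.range L ≤ LinearMap.range (Algebra.linearMap B F) := by
    rintro _ ⟨x, rfl⟩
    obtain ⟨b, hb⟩ := traceLM_mem_range B ht (c * x)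
    exact ⟨b, hb⟩
  have h1 : Module.finrank B ↥(LinearMap.range (Algebra.linearMap B F)) = 1 := by
    rw [LinearMap.finrank_range_of_inj (f := Algebra.linearMap B F)
      (fun x y h => (algebraMap B F).injective h)]
    exact Module.finrank_self B
  have h2 : Module.finrank B ↥(LinearMap.range L) ≤ 1 :=
    h1 ▸ Submodule.finrank_mono hrange
  have h3 := LinearMap.finrank_range_add_finrank_ker L
  omega

lemma finrank_iInf_ker {ι : Type*} (s : Finset ι) (W : ι → Submodule B F)
    (h : ∀ i, Module.finrank B F ≤ Module.finrank B ↥(W i) + 1) :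
    Module.finrank B F ≤ Module.finrank B ↥(⨅ i ∈ s, W i) + s.card := by
  classical
  induction s using Finset.induction with
  | empty =>
    have he : (⨅ i ∈ (∅ : Finset ι), W i) = ⊤ := by simp
    rw [he, finrank_top]; simp

  | @insert a s ha ih =>
    rw [Finset.iInf_insert]
    have h4 := Submodule.finrank_sup_add_finrank_inf_eq (W a) (⨅ i ∈ s, W i)
    have h5 : Module.finrank B ↥(W a ⊔ ⨅ i ∈ s, W i) ≤ Module.finrank B F :=
      Submodule.finrank_le _
    have h6 := h a
    rw [Finset.card_insert_of_notMem ha]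
    omega

end Rank

lemma pair_count_le (r : ℕ) : ∀ m, m ≤ r →
    2 * (∑ j ∈ Finset.range m, (r - 1 - j)) + m * (m + 1) ≤ 2 * (m * r) := by
  intro m
  induction m with
  | zero => simp
  | succ u ih =>
    intro hm
    have h1 := ih (by omega)
    rw [Finset.sum_range_succ]
    have e1 : (u + 1) * (u + 2) = u * (u + 1) + 2 * (u + 1) := by ring
    have e2 : (u + 1) * r = u * r + r := by ring
    have key : r - 1 - u + (u + 1) = r := by omega
    nlinarith [h1, key]

/-- Let `α_1, …, α_r` be distinct, `2 ≤ ℓ ≤ r`, and `δ_1, …, δ_{ℓ-1}`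
nonzero. If `t ≥ (ℓ-1)·r - ℓ(ℓ-1)/2` then the set of nonzero `δ ∈ F` with
`tr((δ/δ_j)·(α_s - α_j)/(α_j - α_ℓ)) = 0` for all `1 ≤ j ≤ ℓ-1` and `j < s ≤ r` has
at least `|B|^{t - (ℓ-1)·r + ℓ(ℓ-1)/2} - 1` elements. -/
theorem good_multiplier_count
    {B F : Type*} [Field B] [Field F] [Fintype B] [Fintype F] [Algebra B F]
    {t r ℓ : ℕ} (ht : Module.finrank B F = t)
    (α : Fin r → F) (hα : Function.Injective α)
    (hℓ2 : 2 ≤ ℓ) (hℓr : ℓ ≤ r)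
    (δ : Fin (ℓ - 1) → F) (hδ : ∀ j, δ j ≠ 0)
    (htbig : (ℓ - 1) * r - ℓ * (ℓ - 1) / 2 ≤ t) :
    Fintype.card B ^ (t + ℓ * (ℓ - 1) / 2 - (ℓ - 1) * r) - 1 ≤
      Nat.card {d : F | d ≠ 0 ∧
        ∀ (j : Fin (ℓ - 1)) (s : Fin r), (j : ℕ) < (s : ℕ) →
          fieldTrace B t ((d / δ j) *
            ((α s - α (Fin.castLE (by omega) j)) /
              (α (Fin.castLE (by omega) j) - α ⟨ℓ - 1, by omega⟩))) = 0} := by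
  classical
  have hq1 : 1 < Fintype.card B := Fintype.one_lt_card
  set G : Set F := {d : F | d ≠ 0 ∧
        ∀ (j : Fin (ℓ - 1)) (s : Fin r), (j : ℕ) < (s : ℕ) →
          fieldTrace B t ((d / δ j) *
            ((α s - α (Fin.castLE (by omega) j)) /
              (α (Fin.castLE (by omega) j) - α ⟨ℓ - 1, by omega⟩))) = 0} with hG
  set c : Fin (ℓ - 1) × Fin r → F := fun p =>
    (δ p.1)⁻¹ * ((α p.2 - α (Fin.castLE (by omega) p.1)) /
      (α (Fin.castLE (by omega) p.1) - α ⟨ℓ - 1, by omega⟩)) with hc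
  set W : Fin (ℓ - 1) × Fin r → Submodule B F := fun p =>
    LinearMap.ker ((traceLM B t) ∘ₗ (LinearMap.mulLeft B (c p))) with hW
  set P : Finset (Fin (ℓ - 1) × Fin r) :=
    Finset.univ.filter (fun p => (p.1 : ℕ) < (p.2 : ℕ)) with hP
  set K : Submodule B F := ⨅ p ∈ P, W p with hK
  -- rank bound
  have hrank : t ≤ Module.finrank B ↥K + P.card := by
    rw [← ht]
    exact finrank_iInf_ker B P W (fun p => ht ▸ finrank_ker_cond B ht (c p))
  -- cardinality of P
  have hPle : P.card ≤ ∑ j : Fin (ℓ - 1), (r - 1 - (j : ℕ)) := by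
    have hsub : P ⊆ Finset.univ.biUnion (fun j : Fin (ℓ - 1) =>
        {j} ×ˢ Finset.Ioi (Fin.castLE (by omega : ℓ - 1 ≤ r) j)) := by
      intro p hp
      rw [hP, Finset.mem_filter] at hp
      refine Finset.mem_biUnion.2 ⟨p.1, Finset.mem_univ _, ?_⟩
      rw [Finset.mem_product]
      exact ⟨Finset.mem_singleton_self _, Finset.mem_Ioi.2 (by
        rw [Fin.lt_def]; exact hp.2)⟩
    calc P.card ≤ _ := Finset.card_le_card hsub
      _ ≤ ∑ j : Fin (ℓ - 1),
          ({j} ×ˢ Finset.Ioi (Fin.castLE (by omega : ℓ - 1 ≤ r) j)).card :=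
        Finset.card_biUnion_le
      _ = ∑ j : Fin (ℓ - 1), (r - 1 - (j : ℕ)) := by
        refine Finset.sum_congr rfl fun j _ => ?_
        rw [Finset.card_product, Finset.card_singleton, one_mul, Fin.card_Ioi]
        rfl
  have hsum : ∑ j : Fin (ℓ - 1), (r - 1 - (j : ℕ))
      = ∑ j ∈ Finset.range (ℓ - 1), (r - 1 - j) :=
    Fin.sum_univ_eq_sum_range _ _
  have hPbound := pair_count_le r (ℓ - 1) (by omega)
  have hℓe : ℓ - 1 + 1 = ℓ := by omega
  rw [hℓe, hsum.symm] at hPbound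
  -- hPbound : 2 * ∑ + (ℓ-1) * ℓ ≤ 2 * ((ℓ-1) * r)
  have hEeven : Even (ℓ * (ℓ - 1)) := by
    rw [mul_comm]
    have := Nat.even_mul_succ_self (ℓ - 1)
    rwa [hℓe] at this
  have hE : 2 * (ℓ * (ℓ - 1) / 2) = ℓ * (ℓ - 1) := Nat.two_mul_div_two_of_even hEeven
  have hM : (ℓ - 1) * ℓ = ℓ * (ℓ - 1) := mul_comm _ _
  have hexp : t + ℓ * (ℓ - 1) / 2 - (ℓ - 1) * r ≤ t - P.card := by
    have h1 : P.card + ℓ * (ℓ - 1) / 2 ≤ (ℓ - 1) * r := by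
      have := hPle
      omega
    omega
  -- cardinality of K
  haveI : FiniteDimensional B F := Module.Finite.of_finite
  have hcardK : Nat.card ↥K = Fintype.card B ^ Module.finrank B ↥K := by
    rw [Nat.card_eq_fintype_card]
    exact Module.card_eq_pow_finrank
  -- K \ {0} ⊆ G
  have hsubset : (K : Set F) ⊆ insert (0 : F) G := by
    intro d hd
    by_cases hd0 : d = 0
    · exact hd0 ▸ Set.mem_insert _ _
    · refine Set.mem_insert_of_mem _ ⟨hd0, fun j s hjs => ?_⟩
      have hmem : d ∈ W (j, s) := by
        have := (Submodule.mem_iInf _).1 hd (j, s)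
        exact (Submodule.mem_iInf _).1 this
          (by rw [hP, Finset.mem_filter]; exact ⟨Finset.mem_univ _, hjs⟩)
      have htr : traceLM B t (c (j, s) * d) = 0 := hmem
      rw [← traceLM_apply]
      have heq : (d / δ j) *
            ((α s - α (Fin.castLE (by omega) j)) /
              (α (Fin.castLE (by omega) j) - α ⟨ℓ - 1, by omega⟩)) = c (j, s) * d := by
        rw [hc]
        ring
      rw [heq]
      exact htr
  -- conclude
  have hKle : Nat.card ↥K ≤ Nat.card G + 1 := by
    have h1 : Nat.card ↥K = (K : Set F).ncard := Nat.card_coe_set_eq _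
    have h2 : Nat.card G = G.ncard := Nat.card_coe_set_eq _
    rw [h1, h2]
    calc (K : Set F).ncard ≤ (insert (0 : F) G).ncard :=
          Set.ncard_le_ncard hsubset (Set.toFinite _)
      _ ≤ G.ncard + 1 := Set.ncard_insert_le _ _
  have hpow : Fintype.card B ^ (t + ℓ * (ℓ - 1) / 2 - (ℓ - 1) * r) ≤ Nat.card ↥K := by
    rw [hcardK]
    apply Nat.pow_le_pow_right (by omega)
    omega
  omega
end

section
/- Let n = |F| and let α_1,...,α_n enumerate F. Let 2 ≤ ℓ+1 ≤ r ≤ n, let δ_1,...,δ_ℓ ∈ F be nonzero, and let S_ℓ = {i ∈ {1,...,n} \ {1,...,r} : ∃ 1 ≤ j < k ≤ ℓ such that (j,k) collide at i}. Fix j with 1 ≤ j ≤ ℓ, and for nonzero δ ∈ F define T_j(δ) = {i ∈ {1,...,n} : α_i ∉ {α_j, α_{ℓ+1}} and (δ/(α_i − α_{ℓ+1}))·B* = (δ_j/(α_i − α_j))·B*}. Then for all but at most r + |S_ℓ| + 1 cosets γ·B* in the quotient group F*/B*, the following holds: every δ ∈ γ·B* satisfies |T_j(δ)| = |B| − 1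 and T_j(δ) ∩ ({1,...,r} ∪ S_ℓ) = ∅. -/
def SameCoset (B : Type*) {F : Type*} [Field B] [Field F] [Algebra B F] (x y : F) : Prop :=
  ∃ b : B, b ≠ 0 ∧ x = y * algebraMap B F b

def CollidesAt (B : Type*) {F : Type*} [Field B] [Field F] [Algebra B F]
    (δa δb αa αb αi : F) : Prop :=
  αi ≠ αa ∧ αi ≠ αb ∧ SameCoset B (δa / (αi - αa)) (δb / (αi - αb))

lemma sameCoset_div_iff {B F : Type*} [Field B] [Field F] [Algebra B F]
    {d t u v : F} (hu : u ≠ 0) (hv : v ≠ 0) :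
    SameCoset B (d / u) (t / v) ↔ SameCoset B d (t * u / v) := by
  constructor
  · rintro ⟨b, hb, h⟩
    refine ⟨b, hb, ?_⟩
    field_simp at h ⊢
    linear_combination h
  · rintro ⟨b, hb, h⟩
    refine ⟨b, hb, ?_⟩
    rw [h]
    field_simp

lemma count_T {B F : Type*} [Field B] [Field F] [Fintype B] [Fintype F] [Algebra B F]
    {n : ℕ} (α : Fin n → F) (hα : Function.Bijective α)
    (aj aL t d : F) (hjL : aj ≠ aL) (ht : t ≠ 0) (hd : d ≠ 0)
    (hdt : ¬ SameCoset B d t)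
    (T : Set (Fin n))
    (hTm : ∀ i, i ∈ T ↔ (α i ≠ aj ∧ α i ≠ aL ∧
      SameCoset B d (t * (α i - aL) / (α i - aj)))) :
    Nat.card T = Fintype.card B - 1 := by
  classical
  have halg : Function.Injective (algebraMap B F) := (algebraMap B F).injective
  set E : Fin n ≃ F := Equiv.ofBijective α hα with hE
  set c : {b : B // b ≠ 0} → F := fun b => d * (algebraMap B F b.1)⁻¹ with hc
  have hcb0 : ∀ b, c b ≠ 0 := by
    intro b
    exact mul_ne_zero hd (inv_ne_zero (by simpa using fun h => b.2 (halg (by simpa using h))))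
  have hcbt : ∀ b, c b ≠ t := by
    intro b h
    apply hdt
    refine ⟨b.1, b.2, ?_⟩
    have hb0 : (algebraMap B F b.1) ≠ 0 := by
      intro h'
      exact b.2 (halg (by simpa using h'))
    simp only [hc] at h
    rw [← h, inv_mul_cancel_right₀ hb0]
  set x : {b : B // b ≠ 0} → F := fun b => (t * aL - c b * aj) / (t - c b) with hx
  have hden : ∀ b, t - c b ≠ 0 := fun b => sub_ne_zero.mpr (Ne.symm (hcbt b))
  have key : ∀ b, t * (x b - aL) = c b * (x b - aj) := by
    intro b
    have h := hden b
    simp only [hx]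
    field_simp
    ring
  have hxj : ∀ b, x b ≠ aj := by
    intro b h
    have h2 : t * (aj - aL) = 0 := by
      have := key b
      rw [h] at this
      simpa using this
    rcases mul_eq_zero.1 h2 with h' | h'
    · exact ht h'
    · exact hjL (sub_eq_zero.mp h')
  have hxL : ∀ b, x b ≠ aL := by
    intro b h
    have h2 : c b * (aL - aj) = 0 := by
      have := key b
      rw [h] at this
      simpa using this.symm
    rcases mul_eq_zero.1 h2 with h' | h'
    · exact hcb0 b h'
    · exact hjL (sub_eq_zero.mp h').symm
  have hg : ∀ b, t * (x b - aL) / (x b - aj) = c b := by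
    intro b
    rw [key b]
    exact mul_div_cancel_right₀ _ (sub_ne_zero.mpr (hxj b))
  have hdc : ∀ b : {b : B // b ≠ 0}, d = c b * algebraMap B F b.1 := by
    intro b
    have hb0 : (algebraMap B F b.1) ≠ 0 := by
      intro h'
      exact b.2 (halg (by simpa using h'))
    simp only [hc]
    rw [inv_mul_cancel_right₀ hb0]
  have huniq : ∀ (b : {b : B // b ≠ 0}) (y : F), y ≠ aj →
      t * (y - aL) / (y - aj) = c b → y = x b := by
    intro b y hy h
    have hy' : y - aj ≠ 0 := sub_ne_zero.mpr hy
    have h1 : t * (y - aL) = c b * (y - aj) := by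
      field_simp at h
      linear_combination h
    rw [hx]
    rw [eq_div_iff (hden b)]
    linear_combination h1
  have hf : ∀ b : {b : B // b ≠ 0}, E.symm (x b) ∈ T := by
    intro b
    rw [hTm]
    have hαx : α (E.symm (x b)) = x b := E.apply_symm_apply (x b)
    rw [hαx]
    refine ⟨hxj b, hxL b, ⟨b.1, b.2, ?_⟩⟩
    rw [hg b]
    exact hdc b
  have hbij : Function.Bijective (fun b : {b : B // b ≠ 0} =>
      (⟨E.symm (x b), hf b⟩ : T)) := by
    constructor
    · intro a b h
      have hxab : x a = x b := E.symm.injective (by simpa using h)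
      have hcab : c a = c b := by rw [← hg a, ← hg b, hxab]
      have : (algebraMap B F a.1)⁻¹ = (algebraMap B F b.1)⁻¹ :=
        mul_left_cancel₀ hd (by simpa [hc] using hcab)
      exact Subtype.ext (halg (inv_injective this))
    · rintro ⟨i, hi⟩
      obtain ⟨h1, h2, b, hb, hdb⟩ := (hTm i).1 hi
      refine ⟨⟨b, hb⟩, ?_⟩
      have hb0 : (algebraMap B F b) ≠ 0 := by
        intro h'
        exact hb (halg (by simpa using h'))
      have hcb : t * (α i - aL) / (α i - aj) = c ⟨b, hb⟩ := by
        rw [hc]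
        rw [hdb]
        field_simp
      have hxi : α i = x ⟨b, hb⟩ := huniq ⟨b, hb⟩ (α i) h1 hcb
      apply Subtype.ext
      show E.symm (x ⟨b, hb⟩) = i
      rw [← hxi]
      exact E.symm_apply_apply i
  have hcard := Nat.card_eq_of_bijective _ hbij
  rw [← hcard, Nat.card_eq_fintype_card]
  have : Fintype.card {b : B // b ≠ 0} = Fintype.card B - Fintype.card {b : B // b = 0} :=
    Fintype.card_subtype_compl _
  rw [this, Fintype.card_subtype_eq]


/-- Let `n = |F|`, `α` enumerate `F`, `2 ≤ ℓ+1 ≤ r ≤ n`, let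
`δ_1, …, δ_ℓ` be nonzero, and let
`S_ℓ = {i ∉ {1,…,r} : ∃ j < k ≤ ℓ, (j,k) collide at i}`. Fix `j ≤ ℓ` and for nonzero
`δ` let `T_j(δ) = {i : α_i ∉ {α_j, α_{ℓ+1}} ∧ (δ/(α_i - α_{ℓ+1}))·B* = (δ_j/(α_i - α_j))·B*}`.
Then for all but at most `r + |S_ℓ| + 1` cosets `γ·B*` in `F*/B*`: every `δ ∈ γ·B*`
satisfies `|T_j(δ)| = |B| - 1` and `T_j(δ) ∩ ({1,…,r} ∪ S_ℓ) = ∅`.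
(Formally: there is a set `bad` of at most `r + |S_ℓ| + 1` nonzero coset
representatives such that every nonzero `δ` lying in no bad coset satisfies both
conclusions.) -/
theorem good_cosets_for_collision_sets
    {B F : Type*} [Field B] [Field F] [Fintype B] [Fintype F] [Algebra B F]
    {n r ℓ : ℕ} (hn : n = Fintype.card F)
    (α : Fin n → F) (hα : Function.Bijective α)
    (hℓ1 : 1 ≤ ℓ) (hℓr : ℓ + 1 ≤ r) (hrn : r ≤ n)
    (δ : Fin ℓ → F) (hδ : ∀ a, δ a ≠ 0)
    (S : Set (Fin n))
    (hS : S = {i : Fin n | r ≤ (i : ℕ) ∧ ∃ a b : Fin ℓ, a < b ∧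
      CollidesAt B (δ a) (δ b)
        (α (Fin.castLE (by omega) a)) (α (Fin.castLE (by omega) b)) (α i)})
    (j : Fin ℓ)
    (T : F → Set (Fin n))
    (hT : ∀ d : F, T d = {i : Fin n |
      α i ≠ α (Fin.castLE (by omega) j) ∧ α i ≠ α ⟨ℓ, by omega⟩ ∧
      SameCoset B (d / (α i - α ⟨ℓ, by omega⟩))
        (δ j / (α i - α (Fin.castLE (by omega) j)))}) :
    ∃ bad : Finset F, (∀ γ ∈ bad, γ ≠ 0) ∧ bad.card ≤ r + Nat.card S + 1 ∧
      ∀ d : F, d ≠ 0 → (∀ γ ∈ bad, ¬ SameCoset B d γ) →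
        Nat.card (T d) = Fintype.card B - 1 ∧
        T d ∩ ({i : Fin n | (i : ℕ) < r} ∪ S) = ∅ := by
  classical
  have hℓle : ℓ ≤ n := by omega
  have hℓlt : ℓ < n := by omega
  set jn : Fin n := Fin.castLE hℓle j with hjn
  set Ln : Fin n := (⟨ℓ, hℓlt⟩ : Fin n) with hLn
  have hTmem : ∀ (d : F) (i : Fin n), i ∈ T d ↔
      (α i ≠ α jn ∧ α i ≠ α Ln ∧
        SameCoset B (d / (α i - α Ln)) (δ j / (α i - α jn))) := by
    intro d i
    rw [hT d]
    exact Iff.rfl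
  have hne : α jn ≠ α Ln := by
    intro h
    have h2 := hα.1 h
    have h3 : (jn : ℕ) = (Ln : ℕ) := congrArg Fin.val h2
    have h4 : (jn : ℕ) = (j : ℕ) := rfl
    have h5 : (Ln : ℕ) = ℓ := rfl
    have := j.isLt
    omega
  have hTmem' : ∀ (d : F) (i : Fin n), i ∈ T d ↔
      (α i ≠ α jn ∧ α i ≠ α Ln ∧
        SameCoset B d (δ j * (α i - α Ln) / (α i - α jn))) := by
    intro d i
    rw [hTmem]
    constructor
    · rintro ⟨h1, h2, hsc⟩
      exact ⟨h1, h2, (sameCoset_div_iff (sub_ne_zero.mpr h2) (sub_ne_zero.mpr h1)).1 hsc⟩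
    · rintro ⟨h1, h2, hsc⟩
      exact ⟨h1, h2, (sameCoset_div_iff (sub_ne_zero.mpr h2) (sub_ne_zero.mpr h1)).2 hsc⟩
  set K : Finset (Fin n) := ({i : Fin n | (i : ℕ) < r} ∪ S).toFinset with hK
  set bad : Finset F :=
    ((K.filter (fun i => α i ≠ α jn ∧ α i ≠ α Ln)).image
      (fun i => δ j * (α i - α Ln) / (α i - α jn))) ∪ {δ j} with hbad
  refine ⟨bad, ?_, ?_, ?_⟩
  · intro γ hγ
    rw [hbad, Finset.mem_union] at hγ
    rcases hγ with hγ | hγ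
    · obtain ⟨i, hi, rfl⟩ := Finset.mem_image.1 hγ
      obtain ⟨-, h1, h2⟩ := Finset.mem_filter.1 hi
      exact div_ne_zero (mul_ne_zero (hδ j) (sub_ne_zero.mpr h2)) (sub_ne_zero.mpr h1)
    · rw [Finset.mem_singleton] at hγ
      rw [hγ]
      exact hδ j
  · calc bad.card ≤ ((K.filter (fun i => α i ≠ α jn ∧ α i ≠ α Ln)).image
          (fun i => δ j * (α i - α Ln) / (α i - α jn))).card + ({δ j} : Finset F).card :=
        Finset.card_union_le _ _
    _ ≤ K.card + 1 := by
        gcongr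
        · exact le_trans (Finset.card_image_le) (Finset.card_filter_le _ _)
        · simp
    _ ≤ r + Nat.card S + 1 := by
        gcongr
        rw [hK, Set.toFinset_union]
        refine le_trans (Finset.card_union_le _ _) ?_
        have h1 : ({i : Fin n | (i : ℕ) < r}).toFinset.card ≤ r := by
          rw [Set.toFinset_card]
          calc Fintype.card {i : Fin n | (i : ℕ) < r}
              ≤ Fintype.card (Fin r) := Fintype.card_le_of_injective
                (fun i => ⟨(i.1 : ℕ), i.2⟩)
                (fun a b h => Subtype.ext (Fin.ext (by
                  simpa using congrArg Fin.val h)))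
            _ = r := Fintype.card_fin r
        have h2 : S.toFinset.card = Nat.card S := by
          rw [Nat.card_coe_set_eq, Set.ncard_eq_toFinset_card']
        omega
  · intro d hd hgood
    constructor
    · refine count_T α hα (α jn) (α Ln) (δ j) d hne (hδ j) hd ?_ (T d) (hTmem' d)
      exact hgood (δ j) (by rw [hbad]; exact Finset.mem_union_right _ (Finset.mem_singleton_self _))
    · ext i
      simp only [Set.mem_inter_iff, Set.mem_empty_iff_false, iff_false, not_and]
      intro hiT hiK
      obtain ⟨h1, h2, hsc⟩ := (hTmem' d i).1 hiT
      refine hgood (δ j * (α i - α Ln) / (α i - α jn)) ?_ hsc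
      rw [hbad]
      refine Finset.mem_union_left _ (Finset.mem_image.2 ⟨i, ?_, rfl⟩)
      exact Finset.mem_filter.2 ⟨by rw [hK]; exact Set.mem_toFinset.2 hiK, h1, h2⟩
end

section
/- Let W ⊆ F be a B-linear subspace of dimension s over B, where F has degree t over B. Then the set of roots of the evaluation map x ↦ L_W(x) = ∏_{α∈W}(x − α) is exactly W, and the image {L_W(x) : x ∈ F} is a B-linear subspace of F of dimension t − s over B. -/
open Polynomial

/-- For a `B`-linear subspace `W ⊆ F` of dimension `s` over `B`,
where `F` has degree `t` over `B`, the set of roots of the evaluation map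
`x ↦ L_W(x) = ∏_{α ∈ W}(x - α)` is exactly `W`, and the image `{L_W(x) : x ∈ F}` is a
`B`-linear subspace of `F` of dimension `t - s` over `B`. -/
theorem subspace_polynomial_kernel_image
    {B F : Type*} [Field B] [Field F] [Fintype B] [Fintype F] [Algebra B F]
    {s t : ℕ} (ht : Module.finrank B F = t)
    (W : Submodule B F) (hW : Module.finrank B W = s) :
    {x : F | (∏ a ∈ (Set.toFinite (W : Set F)).toFinset, (x - a)) = 0} = (W : Set F) ∧
    ∃ V : Submodule B F,
      (V : Set F) =
        Set.range (fun x : F => ∏ a ∈ (Set.toFinite (W : Set F)).toFinset, (x - a)) ∧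
      Module.finrank B V = t - s := by
  classical
  set WF : Finset F := (Set.toFinite (W : Set F)).toFinset with hWF
  have hmem : ∀ x : F, x ∈ WF ↔ x ∈ W := by
    intro x; rw [hWF, Set.Finite.mem_toFinset]; rfl
  set P : F[X] := ∏ a ∈ WF, (X - C a) with hP
  have hPmonic : P.Monic := monic_prod_of_monic _ _ fun a _ => monic_X_sub_C a
  have hPdeg : P.natDegree = WF.card := by
    rw [hP, natDegree_prod _ _ (fun a _ => X_sub_C_ne_zero a)]
    simp
  have heval : ∀ x : F, P.eval x = ∏ a ∈ WF, (x - a) := by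
    intro x; simp [hP, eval_prod]
  have h0W : (0 : F) ∈ WF := (hmem 0).2 W.zero_mem
  have hcard_pos : 0 < WF.card := Finset.card_pos.2 ⟨0, h0W⟩
  -- kernel characterization
  have hker : ∀ x : F, P.eval x = 0 ↔ x ∈ W := by
    intro x
    rw [heval, Finset.prod_eq_zero_iff]
    constructor
    · rintro ⟨a, ha, hxa⟩
      exact (sub_eq_zero.1 hxa) ▸ (hmem a).1 ha
    · intro hx; exact ⟨x, (hmem x).2 hx, sub_self x⟩
  -- translation invariance over W
  have htrans : ∀ (y : F), ∀ x ∈ W, P.eval (x + y) = P.eval y := by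
    intro y x hx
    rw [heval, heval]
    refine Finset.prod_nbij' (fun a => a - x) (fun b => b + x) ?_ ?_ ?_ ?_ ?_
    · intro a ha; exact (hmem _).2 (W.sub_mem ((hmem a).1 ha) hx)
    · intro b hb; exact (hmem _).2 (W.add_mem ((hmem b).1 hb) hx)
    · intro a _; ring
    · intro b _; ring
    · intro a _; ring
  -- additivity
  have hadd : ∀ x y : F, P.eval (x + y) = P.eval x + P.eval y := by
    intro x y
    set Q : F[X] := P.comp (X + C y) - P - C (P.eval y) with hQ
    have hcomp : (P.comp (X + C y)).Monic := hPmonic.comp_X_add_C y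
    have hcompdeg : (P.comp (X + C y)).natDegree = P.natDegree := by
      rw [natDegree_comp, natDegree_X_add_C, mul_one]
    have hPne : P ≠ 0 := hPmonic.ne_zero
    have hdegeq : (P.comp (X + C y)).degree = P.degree := by
      rw [degree_eq_natDegree (comp_X_add_C_ne_zero_iff.2 hPne), degree_eq_natDegree hPne,
        hcompdeg]
    have hsub : (P.comp (X + C y) - P).degree < P.degree := by
      rw [← hdegeq]
      exact degree_sub_lt hdegeq (comp_X_add_C_ne_zero_iff.2 hPne)
        (hcomp.leadingCoeff.trans hPmonic.leadingCoeff.symm)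
    have hQdeg : Q.degree < (WF.card : WithBot ℕ) := by
      have h1 : (P.comp (X + C y) - P).degree < (WF.card : WithBot ℕ) := by
        calc (P.comp (X + C y) - P).degree < P.degree := hsub
          _ ≤ (P.natDegree : WithBot ℕ) := degree_le_natDegree
          _ = (WF.card : WithBot ℕ) := by rw [hPdeg]
      have h2 : (C (P.eval y)).degree < (WF.card : WithBot ℕ) := by
        apply lt_of_le_of_lt (degree_C_le)
        exact_mod_cast WithBot.coe_lt_coe.2 hcard_pos
      calc Q.degree ≤ max (P.comp (X + C y) - P).degree (C (P.eval y)).degree :=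
            degree_sub_le _ _
        _ < (WF.card : WithBot ℕ) := max_lt h1 h2
    have hQzero : Q = 0 := by
      apply eq_zero_of_natDegree_lt_card_of_eval_eq_zero' Q WF
      · intro x hx
        have hxW := (hmem x).1 hx
        simp only [hQ, eval_sub, eval_comp, eval_add, eval_X, eval_C]
        rw [htrans y x hxW, (hker x).2 hxW]
        ring
      · rcases eq_or_ne Q 0 with h | h
        · simpa [h] using hcard_pos
        · have := (natDegree_lt_iff_degree_lt h).2 (by simpa using hQdeg)
          simpa using this
    have := congrArg (Polynomial.eval x) hQzero
    simp only [hQ, eval_sub, eval_comp, eval_add, eval_X, eval_C, eval_zero] at this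
    linear_combination this
  -- scalar invariance
  have hcardW : WF.card = Fintype.card B ^ s := by
    rw [← hW, ← Module.card_eq_pow_finrank (K := B) (V := W)]
    rw [hWF]
    rw [Set.Finite.card_toFinset]
    simp [Fintype.card_coe]
  have hpow : ∀ (c : B) (m : ℕ), (algebraMap B F c) ^ (Fintype.card B ^ m) = algebraMap B F c := by
    intro c m
    induction m with
    | zero => simp
    | succ m ih =>
      rw [pow_succ, pow_mul, ih, ← map_pow, FiniteField.pow_card]
  have hsmul : ∀ (c : B) (x : F), P.eval (c • x) = c • P.eval x := by
    intro c x
    rcases eq_or_ne c 0 with rfl | hc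
    · simp [heval]
      exact Finset.prod_eq_zero h0W (by simp)
    · have hc' : algebraMap B F c ≠ 0 := by
        simpa using (map_ne_zero_iff _ (algebraMap B F).injective).2 hc
      rw [heval, heval, Algebra.smul_def, Algebra.smul_def]
      set d := algebraMap B F c with hd
      have : ∀ a ∈ WF, d * x - a = d * (x - d⁻¹ * a) := by
        intro a _; rw [mul_sub, mul_inv_cancel_left₀ hc']
      rw [Finset.prod_congr rfl this, Finset.prod_mul_distrib, Finset.prod_const]
      have hbij : ∏ a ∈ WF, (x - d⁻¹ * a) = ∏ a ∈ WF, (x - a) := by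
        refine Finset.prod_nbij' (fun a => d⁻¹ * a) (fun b => d * b) ?_ ?_ ?_ ?_ ?_
        · intro a ha
          show d⁻¹ * a ∈ WF
          have h1 : d⁻¹ * a = c⁻¹ • a := by rw [Algebra.smul_def, map_inv₀, hd]
          rw [h1]
          exact (hmem _).2 (W.smul_mem c⁻¹ ((hmem a).1 ha))
        · intro b hb
          show d * b ∈ WF
          have h1 : d * b = c • b := by rw [Algebra.smul_def, hd]
          rw [h1]
          exact (hmem _).2 (W.smul_mem c ((hmem b).1 hb))
        · intro a _; show d * (d⁻¹ * a) = a; field_simp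
        · intro b _; show d⁻¹ * (d * b) = b; field_simp
        · intro a _; rfl
      rw [hbij, hcardW, hd, hpow c s]
  -- build the linear map
  let ℓ : F →ₗ[B] F :=
    { toFun := fun x => P.eval x
      map_add' := hadd
      map_smul' := fun c x => by simpa using hsmul c x }
  have hkerℓ : LinearMap.ker ℓ = W := by
    ext x
    simpa [ℓ, LinearMap.mem_ker] using hker x
  constructor
  · ext x
    simpa [← heval] using hker x
  · refine ⟨LinearMap.range ℓ, ?_, ?_⟩
    · ext v
      simp [ℓ, LinearMap.mem_range, heval, Set.mem_range]
    · have := LinearMap.finrank_range_add_finrank_ker ℓ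
      rw [hkerℓ, hW, ht] at this
      omega
end
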